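/- arXiv:1212.2178 — 7 statements merged into one kernel-verified Lean document; each statement's English description precedes it below -/
import Mathlib

section
/- Let G be a finite undirected graph and let O1 and O2 be two orientations of G such that every vertex has the same indegree in O1 as in O2. Then O1 can be transformed into O2 by a finite sequence of cycle reversals (each cycle reversal reverses every arc of some directed cycle). -/
/-- An orientation of an undirected simple graph `G`: each edge is assigned
exactly one direction, giving the arc relation `arc`. -/
structure GraphOrientation {V : Type*} (G : SimpleGraph V) where
  arc : V → V → Prop
  adj_iff : ∀ u v, G.Adj u v ↔ (arc u v ∨ arc v u)
  asymm : ∀ u v, arc u v → ¬ arc v u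

/-- The indegree of a vertex in an orientation. -/
noncomputable def indeg {V : Type*} {G : SimpleGraph V} (D : GraphOrientation G) (v : V) : ℕ :=
  {u | D.arc u v}.ncard

/-- The list of consecutive arcs of a path given as a list of vertices. -/
def pathArcs {V : Type*} (p : List V) : List (V × V) := p.zip p.tail

/-- The list of arcs of a cycle given as a list of (distinct) vertices,
including the closing arc from the last vertex back to the first. -/
def cycleArcs {V : Type*} (p : List V) : List (V × V) := p.zip (p.rotate 1)

/-- `p` is a (simple) directed path from `u` to `v` with respect to the arc relation `A`. -/
def IsDipath {V : Type*} (A : V → V → Prop) (p : List V) (u v : V) : Prop :=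
  p.head? = some u ∧ p.getLast? = some v ∧ p.Nodup ∧ p.Chain' A

/-- `D'` is obtained from `D` by reversing exactly the arcs in the list `A`
(all of which must be arcs of `D`). -/
def ReversalAlong {V : Type*} {G : SimpleGraph V} (D D' : GraphOrientation G)
    (A : List (V × V)) : Prop :=
  (∀ a ∈ A, D.arc a.1 a.2) ∧ ∀ u v, D'.arc u v ↔ ((D.arc u v ∧ (u, v) ∉ A) ∨ (v, u) ∈ A)

/-- `D'` is obtained from `D` by reversing every arc of some directed cycle. -/
def CycleReversal {V : Type*} {G : SimpleGraph V} (D D' : GraphOrientation G) : Prop :=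
  ∃ p : List V, p ≠ [] ∧ p.Nodup ∧ ReversalAlong D D' (cycleArcs p)

/-- `D'` is obtained from `D` by a weak reversal: reversing a directed path
from `u` to `v` where `δ(u) = δ(v) - 1`. -/
def WeakReversal {V : Type*} {G : SimpleGraph V} (D D' : GraphOrientation G) : Prop :=
  ∃ (p : List V) (u v : V), IsDipath D.arc p u v ∧ indeg D u + 1 = indeg D v ∧
    ReversalAlong D D' (pathArcs p)

/-- `D` contains no reversible path, i.e. no directed path from `u` to `v`
with `δ(u) < δ(v) - 1`. -/
def NoReversiblePath {V : Type*} {G : SimpleGraph V} (D : GraphOrientation G) : Prop :=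
  ∀ u v : V, Relation.ReflTransGen D.arc u v → indeg D v ≤ indeg D u + 1

/-- The indegree sequence of an orientation, sorted in decreasing order. -/
noncomputable def degSeq {V : Type*} [Fintype V] {G : SimpleGraph V}
    (D : GraphOrientation G) : List ℕ :=
  ((Finset.univ.val.map (indeg D)).sort (· ≤ ·)).reverse

/-- Lexicographic (non-strict) comparison of lists of naturals. -/
def lexLE (l₁ l₂ : List ℕ) : Prop := l₁ = l₂ ∨ List.Lex (· < ·) l₁ l₂

/-- `u` two-reaches `v`: there are two arc-disjoint directed paths from `u` to `v`. -/
def TwoReaches {V : Type*} (A : V → V → Prop) (u v : V) : Prop :=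
  ∃ p q : List V, IsDipath A p u v ∧ IsDipath A q u v ∧ ∀ a ∈ pathArcs p, a ∉ pathArcs q

/-- Reachability inside the induced subgraph `G[U]`. -/
def ReachIn {V : Type*} (G : SimpleGraph V) (U : Set V) (x y : V) : Prop :=
  Relation.ReflTransGen (fun a b => a ∈ U ∧ b ∈ U ∧ G.Adj a b) x y

/-- `C` is a connected component of the induced undirected subgraph `G[U]`. -/
def IsCompOf {V : Type*} (G : SimpleGraph V) (U C : Set V) : Prop :=
  ∃ x ∈ U, C = {y | ReachIn G U x y}



lemma mem_cycleArcs_iff {V : Type*} {p : List V} {a b : V} :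
    (a, b) ∈ cycleArcs p ↔ ∃ (i : ℕ) (h : i < p.length),
      p[i] = a ∧ (p.rotate 1)[i]'(by simpa using h) = b := by
  unfold cycleArcs
  rw [List.mem_iff_getElem]
  constructor
  · rintro ⟨i, hi, heq⟩
    have hi' : i < p.length := by simpa using hi
    rw [List.getElem_zip, Prod.mk.injEq] at heq
    exact ⟨i, hi', heq.1, heq.2⟩
  · rintro ⟨i, hi, h1, h2⟩
    refine ⟨i, by simpa using hi, ?_⟩
    rw [List.getElem_zip, Prod.mk.injEq]
    exact ⟨h1, h2⟩

lemma mem_of_mem_cycleArcs {V : Type*} {p : List V} {a b : V}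
    (h : (a, b) ∈ cycleArcs p) : a ∈ p ∧ b ∈ p := by
  have := List.of_mem_zip h
  exact ⟨this.1, (List.mem_rotate).mp this.2⟩

lemma cyc_in_fiber {V : Type*} {p : List V} (hnd : p.Nodup) {v : V} (hv : v ∈ p) :
    ∃ u₀, (u₀, v) ∈ cycleArcs p ∧ ∀ u, (u, v) ∈ cycleArcs p → u = u₀ := by
  have hv' : v ∈ p.rotate 1 := (List.mem_rotate).mpr hv
  obtain ⟨j, hj, hje⟩ := List.mem_iff_getElem.mp hv'
  have hj' : j < p.length := by simpa using hj
  have hndr : (p.rotate 1).Nodup := (List.nodup_rotate).mpr hnd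
  refine ⟨p[j], mem_cycleArcs_iff.mpr ⟨j, hj', rfl, hje⟩, ?_⟩
  intro u hu
  obtain ⟨i, hi, h1, h2⟩ := mem_cycleArcs_iff.mp hu
  have : i = j := by
    have := (hndr.getElem_inj_iff (hi := by simpa using hi) (hj := hj)).mp (h2.trans hje.symm)
    exact this
  subst this; exact h1.symm

lemma cyc_out_fiber {V : Type*} {p : List V} (hnd : p.Nodup) {v : V} (hv : v ∈ p) :
    ∃ w₀, (v, w₀) ∈ cycleArcs p ∧ ∀ w, (v, w) ∈ cycleArcs p → w = w₀ := by
  obtain ⟨j, hj, hje⟩ := List.mem_iff_getElem.mp hv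
  refine ⟨(p.rotate 1)[j]'(by simpa using hj), mem_cycleArcs_iff.mpr ⟨j, hj, hje, rfl⟩, ?_⟩
  intro w hw
  obtain ⟨i, hi, h1, h2⟩ := mem_cycleArcs_iff.mp hw
  have : i = j := (hnd.getElem_inj_iff (hi := hi) (hj := hj)).mp (h1.trans hje.symm)
  subst this; exact h2.symm

lemma exists_cycle {V : Type*} [Fintype V] (S : Set (V × V))
    (bal : ∀ v, {u | (u, v) ∈ S}.ncard = {u | (v, u) ∈ S}.ncard)
    (hne : S.Nonempty) :
    ∃ p : List V, p ≠ [] ∧ p.Nodup ∧ ∀ a ∈ cycleArcs p, a ∈ S := by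
  classical
  obtain ⟨⟨a, b⟩, hab⟩ := hne
  have hsucc : ∀ v : V, (∃ u, (u, v) ∈ S) → ∃ w, (v, w) ∈ S := by
    intro v hv
    have h2 : 0 < {u | (v, u) ∈ S}.ncard := by
      rw [← bal v]
      exact (Set.ncard_pos (Set.toFinite _)).mpr hv
    exact (Set.ncard_pos (Set.toFinite _)).mp h2
  set g : V → V := fun v => if h : ∃ w, (v, w) ∈ S then h.choose else v with hg
  have hgspec : ∀ v : V, (∃ u, (u, v) ∈ S) → (v, g v) ∈ S := by
    intro v hv
    have h := hsucc v hv
    simp only [hg, dif_pos h]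
    exact h.choose_spec
  set seq : ℕ → V := fun n => g^[n] b with hseq
  have hin : ∀ n, ∃ u, (u, seq n) ∈ S := by
    intro n
    induction n with
    | zero => exact ⟨a, hab⟩
    | succ n ihn =>
      refine ⟨seq n, ?_⟩
      have := hgspec (seq n) ihn
      simpa [hseq, Function.iterate_succ_apply'] using this
  have harc : ∀ n, (seq n, seq (n + 1)) ∈ S := by
    intro n
    have := hgspec (seq n) (hin n)
    simpa [hseq, Function.iterate_succ_apply'] using this
  -- find a repeat
  have hninj : ¬ Function.Injective (fun i : Fin (Fintype.card V + 1) => seq i) := by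
    intro hinj
    have := Fintype.card_le_of_injective _ hinj
    simp at this
  have hP : ∃ m, ∃ k < m, seq k = seq m := by
    rw [Function.not_injective_iff] at hninj
    obtain ⟨i, j, hij, hne⟩ := hninj
    rcases lt_or_gt_of_ne (fun h => hne (Fin.ext h)) with hlt | hlt
    · exact ⟨j, i, hlt, hij⟩
    · exact ⟨i, j, hlt, hij.symm⟩
  set jm := Nat.find hP with hjm
  obtain ⟨im, him_lt, him_eq⟩ := Nat.find_spec hP
  set L := jm - im with hL
  have hL0 : 0 < L := by omega
  refine ⟨(List.range' im L).map seq, ?_, ?_, ?_⟩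
  · apply List.ne_nil_of_length_pos
    simp only [List.length_map, List.length_range']
    omega
  · rw [List.nodup_iff_injective_getElem]
    rintro ⟨k, hk⟩ ⟨l, hl⟩ heq
    simp only [List.getElem_map, List.getElem_range'_1, List.length_map,
      List.length_range'] at heq hk hl
    rcases lt_trichotomy k l with hlt | hEq | hlt
    · exfalso
      have : im + l < jm := by omega
      exact Nat.find_min hP this ⟨im + k, by omega, heq⟩
    · exact Fin.ext (by simpa using hEq)
    · exfalso
      have : im + k < jm := by omega
      exact Nat.find_min hP this ⟨im + l, by omega, heq.symm⟩
  · rintro ⟨x, y⟩ hxy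
    obtain ⟨i, hi, h1, h2⟩ := mem_cycleArcs_iff.mp hxy
    set p := (List.range' im L).map seq with hp
    have hlen : p.length = L := by simp [hp]
    have hgetp : ∀ t (ht : t < p.length), p[t] = seq (im + t) := by
      intro t ht
      simp [hp, List.getElem_range'_1]
    rw [List.getElem_rotate] at h2
    have hi' : i < L := by rwa [hlen] at hi
    rw [hgetp i hi] at h1
    by_cases hcase : i + 1 < L
    · have hmod : (i + 1) % p.length = i + 1 := by rw [hlen]; exact Nat.mod_eq_of_lt hcase
      rw [hgetp] at h2
      rw [hmod] at h2
      rw [← h1, ← h2]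
      have e : im + (i + 1) = im + i + 1 := by omega
      rw [e]
      exact harc (im + i)
    · have hieq : i + 1 = L := by omega
      have hmod : (i + 1) % p.length = 0 := by rw [hlen, hieq]; exact Nat.mod_self L
      rw [hgetp] at h2
      rw [hmod] at h2
      simp only [Nat.add_zero] at h2
      have him : seq im = seq jm := him_eq.symm ▸ him_eq
      rw [← h1, ← h2]
      have := harc (jm - 1)
      have e1 : im + i = jm - 1 := by omega
      have e2 : jm - 1 + 1 = jm := by omega
      rw [e1, him_eq]
      rw [e2] at this
      exact this

lemma GraphOrientation.ext' {V : Type*} {G : SimpleGraph V} {D E : GraphOrientation G}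
    (h : D.arc = E.arc) : D = E := by
  cases D; cases E; simp_all

/-- Reverse the arcs in the list `C` (all arcs of `D`, with no opposite pairs). -/
noncomputable def reorient {V : Type*} {G : SimpleGraph V} (D : GraphOrientation G)
    (C : List (V × V)) (hC : ∀ a ∈ C, D.arc a.1 a.2) : GraphOrientation G where
  arc u v := (D.arc u v ∧ (u, v) ∉ C) ∨ (v, u) ∈ C
  adj_iff := by
    intro u v
    rw [D.adj_iff u v]
    constructor
    · rintro (h | h)
      · by_cases hc : (u, v) ∈ C
        · exact Or.inr (Or.inr hc)
        · exact Or.inl (Or.inl ⟨h, hc⟩)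
      · by_cases hc : (v, u) ∈ C
        · exact Or.inl (Or.inr hc)
        · exact Or.inr (Or.inl ⟨h, hc⟩)
    · rintro ((⟨h, _⟩ | h) | (⟨h, _⟩ | h))
      · exact Or.inl h
      · exact Or.inr (hC _ h)
      · exact Or.inr h
      · exact Or.inl (hC _ h)
  asymm := by
    intro u v h1 h2
    rcases h1 with ⟨ha, hna⟩ | hc
    · rcases h2 with ⟨hb, _⟩ | hc'
      · exact D.asymm u v ha hb
      · exact hna hc'
    · rcases h2 with ⟨hb, hnb⟩ | hc'
      · exact hnb hc
      · exact D.asymm v u (hC _ hc) (hC _ hc')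

lemma key_ind {V : Type*} [Fintype V] {G : SimpleGraph V} (O2 : GraphOrientation G) :
    ∀ n (D : GraphOrientation G),
      {x : V × V | D.arc x.1 x.2 ∧ O2.arc x.2 x.1}.ncard = n →
      (∀ v : V, {u | D.arc u v ∧ O2.arc v u}.ncard = {u | D.arc v u ∧ O2.arc u v}.ncard) →
      Relation.ReflTransGen (fun D D' : GraphOrientation G => CycleReversal D D') D O2 := by
  intro n
  induction n using Nat.strong_induction_on with
  | _ n ih =>
  intro D hcard bal
  by_cases hemp : {x : V × V | D.arc x.1 x.2 ∧ O2.arc x.2 x.1} = ∅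
  · have hDE : D = O2 := by
      apply GraphOrientation.ext'
      funext u v
      apply propext
      have hnot : ∀ x y : V, ¬ (D.arc x y ∧ O2.arc y x) := by
        intro x y hxy
        exact Set.eq_empty_iff_forall_notMem.mp hemp (x, y) hxy
      constructor
      · intro h1
        rcases (O2.adj_iff u v).mp ((D.adj_iff u v).mpr (Or.inl h1)) with h2 | h2
        · exact h2
        · exact absurd ⟨h1, h2⟩ (hnot u v)
      · intro h2
        rcases (D.adj_iff u v).mp ((O2.adj_iff u v).mpr (Or.inl h2)) with h1 | h1
        · exact h1
        · exact absurd ⟨h1, h2⟩ (hnot v u)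
    rw [hDE]
  · set S : Set (V × V) := {x | D.arc x.1 x.2 ∧ O2.arc x.2 x.1} with hSdef
    have hne : S.Nonempty := Set.nonempty_iff_ne_empty.mpr hemp
    have balS : ∀ v : V, {u | (u, v) ∈ S}.ncard = {u | (v, u) ∈ S}.ncard := bal
    obtain ⟨p, hp0, hpnd, hpS⟩ := exists_cycle S balS hne
    have hCarc : ∀ a ∈ cycleArcs p, D.arc a.1 a.2 := fun a ha => (hpS a ha).1
    have hCarc2 : ∀ a ∈ cycleArcs p, O2.arc a.2 a.1 := fun a ha => (hpS a ha).2
    set D' := reorient D (cycleArcs p) hCarc with hD'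
    have harc' : ∀ u v, D'.arc u v ↔ ((D.arc u v ∧ (u,v) ∉ cycleArcs p) ∨ (v,u) ∈ cycleArcs p) :=
      fun u v => Iff.rfl
    have hstep : CycleReversal D D' := ⟨p, hp0, hpnd, hCarc, harc'⟩
    have hdiff : ∀ u v : V, (D'.arc u v ∧ O2.arc v u) ↔
        ((D.arc u v ∧ O2.arc v u) ∧ (u, v) ∉ cycleArcs p) := by
      intro u v
      constructor
      · rintro ⟨h1 | h1, h2⟩
        · exact ⟨⟨h1.1, h2⟩, h1.2⟩
        · exact absurd h2 (O2.asymm u v (hCarc2 _ h1))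
      · rintro ⟨⟨h1, h2⟩, h3⟩
        exact ⟨Or.inl ⟨h1, h3⟩, h2⟩
    have hSset : {x : V × V | D'.arc x.1 x.2 ∧ O2.arc x.2 x.1}
        = S \ {x | x ∈ cycleArcs p} := by
      ext ⟨u, v⟩
      simp only [Set.mem_setOf_eq, Set.mem_diff, hSdef]
      exact (hdiff u v).trans (by tauto)
    have hCne : cycleArcs p ≠ [] := by
      apply List.ne_nil_of_length_pos
      have : 0 < p.length := List.length_pos_iff.mpr hp0
      simpa [cycleArcs] using this
    obtain ⟨c, hc⟩ := List.exists_mem_of_ne_nil _ hCne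
    have hlt : {x : V × V | D'.arc x.1 x.2 ∧ O2.arc x.2 x.1}.ncard < n := by
      rw [hSset, ← hcard]
      apply Set.ncard_lt_ncard _ (Set.toFinite S)
      constructor
      · exact Set.diff_subset
      · intro hsub
        have hcS : c ∈ S := hpS c hc
        have h2 := hsub hcS
        exact h2.2 hc
    have bal' : ∀ v : V, {u | D'.arc u v ∧ O2.arc v u}.ncard
        = {u | D'.arc v u ∧ O2.arc u v}.ncard := by
      intro v
      have ein : {u | D'.arc u v ∧ O2.arc v u}
          = {u | (u, v) ∈ S} \ {u | (u, v) ∈ cycleArcs p} := by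
        ext u
        simp only [Set.mem_setOf_eq, Set.mem_diff, hSdef]
        exact (hdiff u v).trans (by tauto)
      have eout : {u | D'.arc v u ∧ O2.arc u v}
          = {u | (v, u) ∈ S} \ {u | (v, u) ∈ cycleArcs p} := by
        ext u
        simp only [Set.mem_setOf_eq, Set.mem_diff, hSdef]
        exact (hdiff v u).trans (by tauto)
      rw [ein, eout]
      by_cases hv : v ∈ p
      · obtain ⟨u₀, hu₀, hu₀u⟩ := cyc_in_fiber hpnd hv
        obtain ⟨w₀, hw₀, hw₀u⟩ := cyc_out_fiber hpnd hv
        have e1 : {u | (u, v) ∈ cycleArcs p} = {u₀} := by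
          ext u; simp only [Set.mem_setOf_eq, Set.mem_singleton_iff]
          exact ⟨hu₀u u, fun h => h ▸ hu₀⟩
        have e2 : {u | (v, u) ∈ cycleArcs p} = {w₀} := by
          ext u; simp only [Set.mem_setOf_eq, Set.mem_singleton_iff]
          exact ⟨hw₀u u, fun h => h ▸ hw₀⟩
        rw [e1, e2]
        have hm1 : u₀ ∈ {u | (u, v) ∈ S} := hpS _ hu₀
        have hm2 : w₀ ∈ {u | (v, u) ∈ S} := hpS _ hw₀
        rw [Set.ncard_diff_singleton_of_mem hm1,
            Set.ncard_diff_singleton_of_mem hm2, balS v]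
      · have e1 : {u | (u, v) ∈ cycleArcs p} = ∅ := by
          ext u; simp only [Set.mem_setOf_eq, Set.mem_empty_iff_false, iff_false]
          intro hmem; exact hv (mem_of_mem_cycleArcs hmem).2
        have e2 : {u | (v, u) ∈ cycleArcs p} = ∅ := by
          ext u; simp only [Set.mem_setOf_eq, Set.mem_empty_iff_false, iff_false]
          intro hmem; exact hv (mem_of_mem_cycleArcs hmem).1
        rw [e1, e2, Set.diff_empty, Set.diff_empty, balS v]
    exact Relation.ReflTransGen.head hstep (ih _ hlt D' rfl bal')

/-- If two orientations of a finite graph have the same indegree at every vertex,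
then one can be transformed into the other by a finite sequence of cycle reversals. -/
theorem stmt_0 {V : Type*} [Fintype V] (G : SimpleGraph V)
    (O1 O2 : GraphOrientation G) (h : ∀ v : V, indeg O1 v = indeg O2 v) :
    Relation.ReflTransGen (fun D D' : GraphOrientation G => CycleReversal D D') O1 O2 := by
  have bal : ∀ v : V, {u | O1.arc u v ∧ O2.arc v u}.ncard
      = {u | O1.arc v u ∧ O2.arc u v}.ncard := by
    intro v
    have e1 : {u | O1.arc u v}
        = {u | O1.arc u v ∧ O2.arc u v} ∪ {u | O1.arc u v ∧ O2.arc v u} := by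
      ext u
      simp only [Set.mem_setOf_eq, Set.mem_union]
      constructor
      · intro h1
        rcases (O2.adj_iff u v).mp ((O1.adj_iff u v).mpr (Or.inl h1)) with h2 | h2
        · exact Or.inl ⟨h1, h2⟩
        · exact Or.inr ⟨h1, h2⟩
      · tauto
    have e2 : {u | O2.arc u v}
        = {u | O1.arc u v ∧ O2.arc u v} ∪ {u | O1.arc v u ∧ O2.arc u v} := by
      ext u
      simp only [Set.mem_setOf_eq, Set.mem_union]
      constructor
      · intro h2
        rcases (O1.adj_iff u v).mp ((O2.adj_iff u v).mpr (Or.inl h2)) with h1 | h1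
        · exact Or.inl ⟨h1, h2⟩
        · exact Or.inr ⟨h1, h2⟩
      · tauto
    have d1 : Disjoint {u | O1.arc u v ∧ O2.arc u v} {u | O1.arc u v ∧ O2.arc v u} := by
      rw [Set.disjoint_left]
      rintro u ⟨_, h2⟩ ⟨_, h2'⟩
      exact O2.asymm u v h2 h2'
    have d2 : Disjoint {u | O1.arc u v ∧ O2.arc u v} {u | O1.arc v u ∧ O2.arc u v} := by
      rw [Set.disjoint_left]
      rintro u ⟨h1, _⟩ ⟨h1', _⟩
      exact O1.asymm u v h1 h1'
    have hv := h v
    unfold indeg at hv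
    rw [e1, e2, Set.ncard_union_eq d1 (Set.toFinite _) (Set.toFinite _),
        Set.ncard_union_eq d2 (Set.toFinite _) (Set.toFinite _)] at hv
    exact Nat.add_left_cancel hv
  exact key_ind O2 _ O1 rfl bal
end

section
/- Let G be a finite undirected graph, let D_lex be an orientation of G that minimizes the lexicographic order of the indegree sequence among all orientations of G, and let D be an orientation of G containing no reversible path. Then D_lex can be transformed into D by a finite sequence of weak reversals and cycle reversals. -/
section Lists
variable {V : Type*}

@[simp] lemma pathArcs_nil : pathArcs ([] : List V) = [] := rfl
@[simp] lemma pathArcs_single (a : V) : pathArcs [a] = [] := rfl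
@[simp] lemma pathArcs_cons_cons (a b : V) (t : List V) :
    pathArcs (a :: b :: t) = (a, b) :: pathArcs (b :: t) := rfl

lemma snd_mem_tail {p : List V} {x y : V} (h : (x, y) ∈ pathArcs p) : y ∈ p.tail := by
  induction p with
  | nil => simp [pathArcs] at h
  | cons a t ih =>
    cases t with
    | nil => simp at h
    | cons b t' =>
      rw [pathArcs_cons_cons] at h
      rcases List.mem_cons.1 h with h | h
      · simp only [Prod.mk.injEq] at h
        simp [h.2]
      · exact List.mem_cons_of_mem _ (ih h)

lemma fst_mem_dropLast {p : List V} {x y : V} (h : (x, y) ∈ pathArcs p) : x ∈ p.dropLast := by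
  induction p with
  | nil => simp [pathArcs] at h
  | cons a t ih =>
    cases t with
    | nil => simp at h
    | cons b t' =>
      rw [pathArcs_cons_cons] at h
      rw [List.dropLast_cons₂]
      rcases List.mem_cons.1 h with h | h
      · simp only [Prod.mk.injEq] at h
        simp [h.1]
      · exact List.mem_cons_of_mem _ (ih h)

lemma chain'_pathArcs {R : V → V → Prop} {p : List V} (h : p.Chain' R) :
    ∀ a ∈ pathArcs p, R a.1 a.2 := by
  induction p with
  | nil => simp
  | cons a t ih =>
    cases t with
    | nil => simp
    | cons b t' =>
      rw [pathArcs_cons_cons]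
      rintro c hc
      rcases List.mem_cons.1 hc with hc | hc
      · subst hc; exact (List.isChain_cons_cons.1 h).1
      · exact ih (List.isChain_cons_cons.1 h).2 c hc

/-- In-set of a vertex w.r.t. an arc list. -/
def inSet (A : List (V × V)) (w : V) : Set V := {x | (x, w) ∈ A}
def outSet (A : List (V × V)) (w : V) : Set V := {x | (w, x) ∈ A}

lemma inSet_empty_of_not_mem_tail {p : List V} {w : V} (h : w ∉ p.tail) :
    inSet (pathArcs p) w = ∅ := by
  ext x; simp only [inSet, Set.mem_setOf_eq, Set.mem_empty_iff_false, iff_false]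
  exact fun hx => h (snd_mem_tail hx)

lemma outSet_empty_of_not_mem_dropLast {p : List V} {w : V} (h : w ∉ p.dropLast) :
    outSet (pathArcs p) w = ∅ := by
  ext x; simp only [outSet, Set.mem_setOf_eq, Set.mem_empty_iff_false, iff_false]
  exact fun hx => h (fst_mem_dropLast hx)

lemma inSet_singleton_of_mem_tail {p : List V} (hnd : p.Nodup) {w : V} (h : w ∈ p.tail) :
    ∃ x, inSet (pathArcs p) w = {x} := by
  induction p with
  | nil => simp at h
  | cons a t ih =>
    cases t with
    | nil => simp at h
    | cons b t' =>
      simp only [List.tail_cons] at h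
      rcases List.mem_cons.1 h with rfl | h2
      · refine ⟨a, ?_⟩
        ext x
        simp only [inSet, pathArcs_cons_cons, List.mem_cons, Prod.mk.injEq,
          Set.mem_setOf_eq, Set.mem_singleton_iff]
        constructor
        · rintro (⟨rfl, -⟩ | hx)
          · rfl
          · exfalso
            have := snd_mem_tail hx
            simp only [List.tail_cons] at this
            exact (List.nodup_cons.1 (List.nodup_cons.1 hnd).2).1 this
        · rintro rfl; exact Or.inl ⟨rfl, trivial⟩
      · obtain ⟨x, hx⟩ := ih (List.nodup_cons.1 hnd).2 (by simpa using h2)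
        refine ⟨x, ?_⟩
        ext y
        simp only [inSet, pathArcs_cons_cons, List.mem_cons, Prod.mk.injEq, Set.mem_setOf_eq]
        have hwb : w ≠ b := by
          rintro rfl
          exact (List.nodup_cons.1 (List.nodup_cons.1 hnd).2).1 h2
        constructor
        · rintro (⟨-, rfl⟩ | hy)
          · exact absurd rfl hwb
          · have := hx ▸ (show y ∈ inSet (pathArcs (b :: t')) w from hy)
            exact this
        · intro hy
          right
          have : y ∈ inSet (pathArcs (b :: t')) w := hx ▸ hy
          exact this

lemma outSet_singleton_of_mem_dropLast {p : List V} (hnd : p.Nodup) {w : V}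
    (h : w ∈ p.dropLast) : ∃ x, outSet (pathArcs p) w = {x} := by
  induction p with
  | nil => simp at h
  | cons a t ih =>
    cases t with
    | nil => simp at h
    | cons b t' =>
      rw [List.dropLast_cons₂] at h
      rcases List.mem_cons.1 h with rfl | h2
      · refine ⟨b, ?_⟩
        ext x
        simp only [outSet, pathArcs_cons_cons, List.mem_cons, Prod.mk.injEq,
          Set.mem_setOf_eq, Set.mem_singleton_iff]
        constructor
        · rintro (⟨-, rfl⟩ | hx)
          · rfl
          · exfalso
            have := fst_mem_dropLast hx
            have hmem : w ∈ b :: t' := List.mem_of_mem_dropLast this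
            exact (List.nodup_cons.1 hnd).1 hmem
        · rintro rfl; exact Or.inl ⟨trivial, rfl⟩
      · obtain ⟨x, hx⟩ := ih (List.nodup_cons.1 hnd).2 h2
        refine ⟨x, ?_⟩
        ext y
        simp only [outSet, pathArcs_cons_cons, List.mem_cons, Prod.mk.injEq, Set.mem_setOf_eq]
        have hwa : w ≠ a := by
          rintro rfl
          exact (List.nodup_cons.1 hnd).1 (List.mem_of_mem_dropLast h2)
        constructor
        · rintro (⟨rfl, -⟩ | hy)
          · exact absurd rfl hwa
          · exact hx ▸ (show y ∈ outSet (pathArcs (b :: t')) w from hy)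
        · intro hy
          right
          exact (show y ∈ outSet (pathArcs (b :: t')) w from hx ▸ hy)

lemma getLast_mem_tail {p : List V} (h : 2 ≤ p.length) (hx : p ≠ []) :
    p.getLast hx ∈ p.tail := by
  cases p with
  | nil => simp at hx
  | cons a t =>
    cases t with
    | nil => simp at h
    | cons b t' =>
      rw [List.getLast_cons (by simp)]
      exact List.getLast_mem _

lemma head_mem_dropLast {p : List V} (h : 2 ≤ p.length) (hx : p ≠ []) :
    p.head hx ∈ p.dropLast := by
  cases p with
  | nil => simp at hx
  | cons a t =>
    cases t with
    | nil => simp at h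
    | cons b t' => simp [List.dropLast_cons₂]

lemma not_mem_tail_head {p : List V} (hnd : p.Nodup) (hx : p ≠ []) :
    p.head hx ∉ p.tail := by
  cases p with
  | nil => simp at hx
  | cons a t => simpa using (List.nodup_cons.1 hnd).1

lemma not_mem_dropLast_getLast {p : List V} (hnd : p.Nodup) (hx : p ≠ []) :
    p.getLast hx ∉ p.dropLast := by
  intro hmem
  have hdec := List.dropLast_append_getLast hx
  rw [← hdec] at hnd
  rw [List.nodup_append] at hnd
  exact hnd.2.2 _ hmem _ (by simp) rfl

lemma mem_dropLast_of_mem_ne {p : List V} {w : V} (hw : w ∈ p) (hx : p ≠ [])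
    (hne : w ≠ p.getLast hx) : w ∈ p.dropLast := by
  have hdec := List.dropLast_append_getLast hx
  rw [← hdec] at hw
  rcases List.mem_append.1 hw with h | h
  · exact h
  · simp at h; exact absurd h hne

lemma mem_tail_of_mem_ne {p : List V} {w : V} (hw : w ∈ p) (hx : p ≠ [])
    (hne : w ≠ p.head hx) : w ∈ p.tail := by
  cases p with
  | nil => simp at hx
  | cons a t =>
    rcases List.mem_cons.1 hw with rfl | h
    · simp at hne
    · exact h

end Lists

section Basic
variable {V : Type*} {G : SimpleGraph V}

lemma GraphOrientation.ext'_s1 {D D' : GraphOrientation G} (h : ∀ u v, D.arc u v ↔ D'.arc u v) :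
    D = D' := by
  cases D; cases D'
  simp only [GraphOrientation.mk.injEq]
  funext u v
  exact propext (h u v)

lemma arc_irrefl (D : GraphOrientation G) (v : V) : ¬ D.arc v v := by
  intro h
  have : G.Adj v v := (D.adj_iff v v).2 (Or.inl h)
  exact G.irrefl this

/-- Reversing the arcs in a list `A` of arcs of `D` yields an orientation. -/
def reverseOr (D : GraphOrientation G) (A : List (V × V)) (hA : ∀ a ∈ A, D.arc a.1 a.2) :
    GraphOrientation G where
  arc u v := (D.arc u v ∧ (u, v) ∉ A) ∨ (v, u) ∈ A
  adj_iff u v := by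
    rw [D.adj_iff u v]
    constructor
    · rintro (h | h)
      · by_cases hm : (u, v) ∈ A
        · exact Or.inr (Or.inr hm)
        · exact Or.inl (Or.inl ⟨h, hm⟩)
      · by_cases hm : (v, u) ∈ A
        · exact Or.inl (Or.inr hm)
        · exact Or.inr (Or.inl ⟨h, hm⟩)
    · rintro ((⟨h, -⟩ | h) | (⟨h, -⟩ | h))
      · exact Or.inl h
      · exact Or.inr (hA _ h)
      · exact Or.inr h
      · exact Or.inl (hA _ h)
  asymm u v := by
    rintro (⟨h1, h2⟩ | h) (⟨h3, h4⟩ | h')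
    · exact D.asymm u v h1 h3
    · exact h2 h'
    · exact h4 h
    · exact D.asymm v u (hA _ h) (hA _ h')

lemma reverseOr_arc (D : GraphOrientation G) (A : List (V × V)) (hA : ∀ a ∈ A, D.arc a.1 a.2)
    (u v : V) : (reverseOr D A hA).arc u v ↔ ((D.arc u v ∧ (u, v) ∉ A) ∨ (v, u) ∈ A) := Iff.rfl

variable [Fintype V]

/-- Indegree change under reversal along `A`. -/
lemma indeg_reverseOr (D : GraphOrientation G) (A : List (V × V)) (hA : ∀ a ∈ A, D.arc a.1 a.2)
    (w : V) :
    indeg (reverseOr D A hA) w + (inSet A w).ncard = indeg D w + (outSet A w).ncard := by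
  classical
  show indeg (reverseOr D A hA) w + {x | (x, w) ∈ A}.ncard = indeg D w + {x | (w, x) ∈ A}.ncard
  have hIn : {x | (x, w) ∈ A} ⊆ {x | D.arc x w} := fun x hx => hA _ hx
  have hS' : {x | (reverseOr D A hA).arc x w} =
      ({x | D.arc x w} \ {x | (x, w) ∈ A}) ∪ {x | (w, x) ∈ A} := by
    ext x
    simp only [reverseOr_arc, Set.mem_setOf_eq, Set.mem_union, Set.mem_diff]
  have hdisj : Disjoint ({x | D.arc x w} \ {x | (x, w) ∈ A}) {x | (w, x) ∈ A} := by
    rw [Set.disjoint_left]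
    rintro x ⟨hx1, -⟩ hx2
    exact D.asymm w x (hA _ hx2) hx1
  have h1 : ({x | D.arc x w} \ {x | (x, w) ∈ A}).ncard
      = {x | D.arc x w}.ncard - {x | (x, w) ∈ A}.ncard := Set.ncard_diff hIn (Set.toFinite _)
  have h2 : {x | (x, w) ∈ A}.ncard ≤ {x | D.arc x w}.ncard :=
    Set.ncard_le_ncard hIn (Set.toFinite _)
  rw [indeg, hS', Set.ncard_union_eq hdisj (Set.toFinite _) (Set.toFinite _), h1, indeg]
  omega

end Basic


section Lists2
variable {V : Type*}

lemma head_ne_getLast {p : List V} (hnd : p.Nodup) (hx : p ≠ []) (hlen : 2 ≤ p.length) :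
    p.head hx ≠ p.getLast hx := by
  intro h
  exact not_mem_dropLast_getLast hnd hx (h ▸ head_mem_dropLast hlen hx)

lemma zip_append_last : ∀ (l1 l2 : List V) (c : V) (h : l1 ≠ [])
    (hl : l1.length = l2.length + 1),
    l1.zip (l2 ++ [c]) = l1.zip l2 ++ [(l1.getLast h, c)] := by
  intro l1
  induction l1 with
  | nil => intro l2 c h hl; simp at h
  | cons a t ih =>
    intro l2 c h hl
    cases t with
    | nil =>
      cases l2 with
      | nil => simp
      | cons b t2 => simp at hl
    | cons a2 t1 =>
      cases l2 with
      | nil => simp at hl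
      | cons b t2 =>
        simp only [List.cons_append, List.zip_cons_cons]
        rw [ih t2 c (by simp) (by simpa using hl)]
        simp [List.getLast_cons]

lemma cycleArcs_eq (p : List V) (hx : p ≠ []) :
    cycleArcs p = pathArcs p ++ [(p.getLast hx, p.head hx)] := by
  cases p with
  | nil => simp at hx
  | cons a t =>
    show (a :: t).zip ((a :: t).rotate 1) = _
    rw [List.rotate_cons_succ, List.rotate_zero]
    have : (a :: t).head hx = a := rfl
    rw [this]
    exact zip_append_last (a :: t) t a hx (by simp)

lemma inSet_append_single (A : List (V × V)) (e : V × V) (w : V) :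
    inSet (A ++ [e]) w = inSet A w ∪ {x | x = e.1 ∧ e.2 = w} := by
  ext x
  simp only [inSet, List.mem_append, List.mem_singleton, Set.mem_union, Set.mem_setOf_eq]
  constructor
  · rintro (h | h)
    · exact Or.inl h
    · right
      rw [Prod.ext_iff] at h
      exact ⟨h.1, h.2.symm⟩
  · rintro (h | ⟨rfl, rfl⟩)
    · exact Or.inl h
    · exact Or.inr rfl

lemma outSet_append_single (A : List (V × V)) (e : V × V) (w : V) :
    outSet (A ++ [e]) w = outSet A w ∪ {x | x = e.2 ∧ e.1 = w} := by
  ext x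
  simp only [outSet, List.mem_append, List.mem_singleton, Set.mem_union, Set.mem_setOf_eq]
  constructor
  · rintro (h | h)
    · exact Or.inl h
    · right
      rw [Prod.ext_iff] at h
      exact ⟨h.2, h.1.symm⟩
  · rintro (h | ⟨rfl, rfl⟩)
    · exact Or.inl h
    · exact Or.inr rfl

lemma inSet_cycle_ncard {p : List V} (hnd : p.Nodup) (hx : p ≠ []) (w : V) (hw : w ∈ p) :
    (inSet (cycleArcs p) w).ncard = 1 := by
  classical
  rw [cycleArcs_eq p hx, inSet_append_single]
  · by_cases hwh : w = p.head hx
    · have h1 : inSet (pathArcs p) w = ∅ :=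
        inSet_empty_of_not_mem_tail (hwh ▸ not_mem_tail_head hnd hx)
      have h2 : {x | x = p.getLast hx ∧ p.head hx = w} = {p.getLast hx} := by
        ext x; simp [hwh]
      rw [h1, h2, Set.empty_union, Set.ncard_singleton]
    · have h2 : {x | x = p.getLast hx ∧ p.head hx = w} = ∅ := by
        ext x
        simp only [Set.mem_setOf_eq, Set.mem_empty_iff_false, iff_false]
        rintro ⟨-, rfl⟩
        exact hwh rfl
      obtain ⟨x0, h1⟩ := inSet_singleton_of_mem_tail hnd (mem_tail_of_mem_ne hw hx hwh)
      rw [h1, h2, Set.union_empty, Set.ncard_singleton]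

lemma inSet_cycle_ncard_zero {p : List V} (hx : p ≠ []) (w : V) (hw : w ∉ p) :
    (inSet (cycleArcs p) w).ncard = 0 := by
  rw [cycleArcs_eq p hx, inSet_append_single]
  have h1 : inSet (pathArcs p) w = ∅ :=
    inSet_empty_of_not_mem_tail (fun h => hw (List.mem_of_mem_tail h))
  have h2 : {x | x = p.getLast hx ∧ p.head hx = w} = ∅ := by
    ext x
    simp only [Set.mem_setOf_eq, Set.mem_empty_iff_false, iff_false]
    rintro ⟨-, rfl⟩
    exact hw (List.head_mem hx)
  rw [h1, h2, Set.union_empty, Set.ncard_empty]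

lemma outSet_cycle_ncard {p : List V} (hnd : p.Nodup) (hx : p ≠ []) (w : V) (hw : w ∈ p) :
    (outSet (cycleArcs p) w).ncard = 1 := by
  classical
  rw [cycleArcs_eq p hx, outSet_append_single]
  · by_cases hwl : w = p.getLast hx
    · have h1 : outSet (pathArcs p) w = ∅ :=
        outSet_empty_of_not_mem_dropLast (hwl ▸ not_mem_dropLast_getLast hnd hx)
      have h2 : {x | x = p.head hx ∧ p.getLast hx = w} = {p.head hx} := by
        ext x; simp [hwl]
      rw [h1, h2, Set.empty_union, Set.ncard_singleton]
    · have h2 : {x | x = p.head hx ∧ p.getLast hx = w} = ∅ := by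
        ext x
        simp only [Set.mem_setOf_eq, Set.mem_empty_iff_false, iff_false]
        rintro ⟨-, rfl⟩
        exact hwl rfl
      obtain ⟨x0, h1⟩ := outSet_singleton_of_mem_dropLast hnd (mem_dropLast_of_mem_ne hw hx hwl)
      rw [h1, h2, Set.union_empty, Set.ncard_singleton]

lemma outSet_cycle_ncard_zero {p : List V} (hx : p ≠ []) (w : V) (hw : w ∉ p) :
    (outSet (cycleArcs p) w).ncard = 0 := by
  rw [cycleArcs_eq p hx, outSet_append_single]
  have h1 : outSet (pathArcs p) w = ∅ :=
    outSet_empty_of_not_mem_dropLast (fun h => hw (List.mem_of_mem_dropLast h))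
  have h2 : {x | x = p.head hx ∧ p.getLast hx = w} = ∅ := by
    ext x
    simp only [Set.mem_setOf_eq, Set.mem_empty_iff_false, iff_false]
    rintro ⟨-, rfl⟩
    exact hw (List.getLast_mem hx)
  rw [h1, h2, Set.union_empty, Set.ncard_empty]

end Lists2

section IndegChange
variable {V : Type*} [Fintype V] {G : SimpleGraph V}

lemma indeg_reverseOr_cycle (D : GraphOrientation G) {p : List V} (hnd : p.Nodup)
    (hx : p ≠ []) (hA : ∀ a ∈ cycleArcs p, D.arc a.1 a.2) (w : V) :
    indeg (reverseOr D (cycleArcs p) hA) w = indeg D w := by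
  have h := indeg_reverseOr D (cycleArcs p) hA w
  by_cases hw : w ∈ p
  · rw [inSet_cycle_ncard hnd hx w hw, outSet_cycle_ncard hnd hx w hw] at h
    omega
  · rw [inSet_cycle_ncard_zero hx w hw, outSet_cycle_ncard_zero hx w hw] at h
    omega

lemma indeg_reverseOr_path (D : GraphOrientation G) {p : List V} (hnd : p.Nodup)
    (hx : p ≠ []) (hlen : 2 ≤ p.length) (hA : ∀ a ∈ pathArcs p, D.arc a.1 a.2) :
    indeg (reverseOr D (pathArcs p) hA) (p.head hx) = indeg D (p.head hx) + 1 ∧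
    indeg (reverseOr D (pathArcs p) hA) (p.getLast hx) + 1 = indeg D (p.getLast hx) ∧
    ∀ w, w ≠ p.head hx → w ≠ p.getLast hx →
      indeg (reverseOr D (pathArcs p) hA) w = indeg D w := by
  refine ⟨?_, ?_, ?_⟩
  · have h := indeg_reverseOr D (pathArcs p) hA (p.head hx)
    rw [inSet_empty_of_not_mem_tail (not_mem_tail_head hnd hx)] at h
    obtain ⟨x0, h1⟩ := outSet_singleton_of_mem_dropLast hnd (head_mem_dropLast hlen hx)
    rw [h1, Set.ncard_singleton, Set.ncard_empty] at h
    omega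
  · have h := indeg_reverseOr D (pathArcs p) hA (p.getLast hx)
    rw [outSet_empty_of_not_mem_dropLast (not_mem_dropLast_getLast hnd hx)] at h
    obtain ⟨x0, h1⟩ := inSet_singleton_of_mem_tail hnd (getLast_mem_tail hlen hx)
    rw [h1, Set.ncard_singleton, Set.ncard_empty] at h
    omega
  · intro w hwu hwv
    have h := indeg_reverseOr D (pathArcs p) hA w
    by_cases hw : w ∈ p
    · obtain ⟨x0, h1⟩ := inSet_singleton_of_mem_tail hnd (mem_tail_of_mem_ne hw hx hwu)
      obtain ⟨x1, h2⟩ := outSet_singleton_of_mem_dropLast hnd (mem_dropLast_of_mem_ne hw hx hwv)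
      rw [h1, h2] at h
      rw [Set.ncard_singleton, Set.ncard_singleton] at h
      omega
    · rw [inSet_empty_of_not_mem_tail (fun hh => hw (List.mem_of_mem_tail hh)),
        outSet_empty_of_not_mem_dropLast (fun hh => hw (List.mem_of_mem_dropLast hh)),
        Set.ncard_empty] at h
      omega

end IndegChange



noncomputable def desc (M : Multiset ℕ) : List ℕ := (M.sort (· ≤ ·)).reverse

lemma desc_coe (M : Multiset ℕ) : (desc M : List ℕ) ≠ [] ↔ M ≠ 0 := by
  simp [desc]
  constructor
  · intro h hM; apply h; rw [hM]; simp
  · intro h hs; apply h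
    have := Multiset.sort_eq (s := M) (r := (· ≤ ·))
    rw [hs] at this; simpa using this.symm

lemma multiset_exists_max (M : Multiset ℕ) (h : M ≠ 0) : ∃ m ∈ M, ∀ y ∈ M, y ≤ m := by
  induction M using Multiset.induction with
  | empty => simp at h
  | cons a s ih =>
    by_cases hs : s = 0
    · subst hs; exact ⟨a, by simp, by simp⟩
    · obtain ⟨m, hm, hmax⟩ := ih hs
      rcases le_total a m with hh | hh
      · exact ⟨m, Multiset.mem_cons_of_mem hm, by
          intro y hy
          rcases Multiset.mem_cons.1 hy with rfl | hy
          · exact hh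
          · exact hmax y hy⟩
      · exact ⟨a, Multiset.mem_cons_self a s, by
          intro y hy
          rcases Multiset.mem_cons.1 hy with rfl | hy
          · exact le_rfl
          · exact (hmax y hy).trans hh⟩

/-- Removing a maximal element: `desc (x ::ₘ M) = x :: desc M` when `x` is max. -/
lemma desc_cons_max (M : Multiset ℕ) (x : ℕ) (hmax : ∀ y ∈ M, y ≤ x) :
    desc (x ::ₘ M) = x :: desc M := by
  have hsort : (x ::ₘ M).sort (· ≤ ·) = M.sort (· ≤ ·) ++ [x] := by
    refine (fun h1 h2 h3 => List.Perm.eq_of_pairwise' (r := (· ≤ ·)) h2 h3 h1) ?_ ?_ ?_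
    · apply Multiset.coe_eq_coe.mp
      rw [← Multiset.coe_add, Multiset.sort_eq,
        show ((([x] : List ℕ)) : Multiset ℕ) = ({x} : Multiset ℕ) from rfl,
        add_comm, Multiset.singleton_add]
      simp
    · exact Multiset.pairwise_sort _ _
    · rw [List.pairwise_append]
      refine ⟨Multiset.pairwise_sort _ _, by simp, ?_⟩
      intro a ha b hb
      simp only [List.mem_singleton] at hb
      subst hb
      exact hmax a ((Multiset.mem_sort _).1 ha)
  simp [desc, hsort]

lemma lex_asymm : ∀ {l1 l2 : List ℕ}, List.Lex (· < ·) l1 l2 → List.Lex (· < ·) l2 l1 → False := by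
  intro l1 l2 h
  induction h with
  | nil => intro h2; cases h2
  | rel h => intro h2; cases h2 with
    | rel h' => omega
    | cons => omega
  | cons h ih => intro h2; cases h2 with
    | rel h' => omega
    | cons h' => exact ih h'

/-- Key lex-decrease lemma. -/
lemma desc_lex_lt (N0 : Multiset ℕ) (a b : ℕ) (hab : a + 1 < b) :
    List.Lex (· < ·) (desc ((a + 1) ::ₘ (b - 1) ::ₘ N0)) (desc (a ::ₘ b ::ₘ N0)) := by
  suffices h : ∀ n (N : Multiset ℕ), N.card = n →
      List.Lex (· < ·) (desc ((a + 1) ::ₘ (b - 1) ::ₘ N)) (desc (a ::ₘ b ::ₘ N)) from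
    h N0.card N0 rfl
  intro n
  induction n using Nat.strong_induction_on with
  | _ n ih =>
  intro N hN
  by_cases hbig : ∃ m ∈ N, b ≤ m
  · have hN0 : N ≠ 0 := by rintro rfl; simp at hbig
    obtain ⟨m, hm, hmax⟩ := multiset_exists_max N hN0
    obtain ⟨m0, hm0, hb0⟩ := hbig
    have hbm : b ≤ m := hb0.trans (hmax m0 hm0)
    have hN' : N = m ::ₘ N.erase m := (Multiset.cons_erase hm).symm
    have d1 : desc (a ::ₘ b ::ₘ N) = m :: desc (a ::ₘ b ::ₘ N.erase m) := by
      conv_lhs => rw [hN']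
      rw [show a ::ₘ b ::ₘ m ::ₘ N.erase m = m ::ₘ a ::ₘ b ::ₘ N.erase m from by
        rw [Multiset.cons_swap b m, Multiset.cons_swap a m]]
      refine desc_cons_max _ m ?_
      intro y hy
      rcases Multiset.mem_cons.1 hy with rfl | hy
      · omega
      · rcases Multiset.mem_cons.1 hy with rfl | hy
        · exact hbm
        · exact hmax y (Multiset.mem_of_mem_erase hy)
    have d2 : desc ((a + 1) ::ₘ (b - 1) ::ₘ N)
        = m :: desc ((a + 1) ::ₘ (b - 1) ::ₘ N.erase m) := by
      conv_lhs => rw [hN']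
      rw [show (a+1) ::ₘ (b-1) ::ₘ m ::ₘ N.erase m = m ::ₘ (a+1) ::ₘ (b-1) ::ₘ N.erase m from by
        rw [Multiset.cons_swap (b-1) m, Multiset.cons_swap (a+1) m]]
      refine desc_cons_max _ m ?_
      intro y hy
      rcases Multiset.mem_cons.1 hy with rfl | hy
      · omega
      · rcases Multiset.mem_cons.1 hy with rfl | hy
        · omega
        · exact hmax y (Multiset.mem_of_mem_erase hy)
    rw [d1, d2]
    have hcard : (N.erase m).card < n := by
      rw [hN'] at hN
      simp only [Multiset.card_cons] at hN
      omega
    exact List.Lex.cons (ih (N.erase m).card hcard (N.erase m) rfl)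
  · push_neg at hbig
    have d1 : desc (a ::ₘ b ::ₘ N) = b :: desc (a ::ₘ N) := by
      rw [Multiset.cons_swap a b]
      refine desc_cons_max _ b ?_
      intro y hy
      rcases Multiset.mem_cons.1 hy with rfl | hy
      · omega
      · exact le_of_lt (hbig y hy)
    have hM'ne : ((a + 1) ::ₘ (b - 1) ::ₘ N) ≠ 0 := by simp
    obtain ⟨m, hm, hmax⟩ := multiset_exists_max _ hM'ne
    have hmb : m < b := by
      rcases Multiset.mem_cons.1 hm with rfl | hm'
      · omega
      · rcases Multiset.mem_cons.1 hm' with rfl | hm''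
        · omega
        · exact hbig m hm''
    have e2 : (a + 1) ::ₘ (b - 1) ::ₘ N = m ::ₘ (((a + 1) ::ₘ (b - 1) ::ₘ N).erase m) :=
      (Multiset.cons_erase hm).symm
    have d2 : desc ((a + 1) ::ₘ (b - 1) ::ₘ N)
        = m :: desc ((((a + 1) ::ₘ (b - 1) ::ₘ N).erase m)) := by
      conv_lhs => rw [e2]
      refine desc_cons_max _ m ?_
      intro y hy
      exact hmax y (Multiset.mem_of_mem_erase hy)
    rw [d1, d2]
    exact List.Lex.rel hmb



section Grow
variable {V : Type*} {R : V → V → Prop}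

lemma rtg_of_chain' : ∀ (p : List V) (u v : V), (u :: p).Chain' R →
    (u :: p).getLast? = some v → Relation.ReflTransGen R u v := by
  intro p
  induction p with
  | nil =>
    intro u v _ h
    simp at h
    subst h
    exact Relation.ReflTransGen.refl
  | cons b t ih =>
    intro u v hc hl
    replace hc := List.isChain_cons_cons.1 hc
    rw [List.getLast?_cons_cons] at hl
    exact Relation.ReflTransGen.head hc.1 (ih b v hc.2 hl)

lemma rtg_of_chain'_rev {S : V → V → Prop} (hRS : ∀ a b, R a b → S b a) :
    ∀ (p : List V) (u v : V), (u :: p).Chain' R →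
    (u :: p).getLast? = some v → Relation.ReflTransGen S v u := by
  intro p
  induction p with
  | nil =>
    intro u v _ h
    simp at h
    subst h
    exact Relation.ReflTransGen.refl
  | cons b t ih =>
    intro u v hc hl
    replace hc := List.isChain_cons_cons.1 hc
    rw [List.getLast?_cons_cons] at hl
    exact Relation.ReflTransGen.tail (ih b v hc.2 hl) (hRS u b hc.1)

/-- Extract a nodup chain list from reflexive-transitive reachability. -/
lemma exists_nodup_chain_of_rtg {u v : V} (h : Relation.ReflTransGen R u v) :
    ∃ p : List V, p.Nodup ∧ p.Chain' R ∧ p.head? = some u ∧ p.getLast? = some v := by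
  induction h with
  | refl => exact ⟨[u], by simp, List.isChain_singleton _, by simp, by simp⟩
  | @tail b c hub hbc ih =>
    obtain ⟨p, hnd, hch, hh, hl⟩ := ih
    have hpne : p ≠ [] := by rintro rfl; simp at hh
    by_cases hcp : c ∈ p
    · obtain ⟨s, t, rfl⟩ := List.append_of_mem hcp
      have hform : s ++ c :: t = (s ++ [c]) ++ t := by simp
      rw [hform] at hnd hch hh
      refine ⟨s ++ [c], ?_, ?_, ?_, ?_⟩
      · exact ((s ++ [c]).sublist_append_left t).nodup hnd
      · exact hch.prefix (List.prefix_append _ _)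
      · rw [← hh]
        cases s with
        | nil => simp
        | cons a s' => simp
      · simp
    · refine ⟨p ++ [c], ?_, ?_, ?_, ?_⟩
      · rw [List.nodup_append]
        exact ⟨hnd, by simp, by simp [List.disjoint_singleton]; exact fun a ha h => hcp (h ▸ ha)⟩
      · refine List.isChain_append.2 ?_
        refine ⟨hch, by simp, ?_⟩
        intro x hx y hy
        simp at hy
        subst hy
        rw [hl] at hx
        simp at hx
        subst hx
        exact hbc
      · rw [List.head?_append_of_ne_nil _ hpne]
        exact hh
      · simp
end Grow

section GrowMain
variable {V : Type*} [Fintype V]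

/-- There is a directed cycle w.r.t. `R`. -/
def HasDicycle (R : V → V → Prop) : Prop :=
  ∃ c : List V, c ≠ [] ∧ c.Nodup ∧ c.Chain' R ∧
    ∃ x y, c.head? = some y ∧ c.getLast? = some x ∧ R x y

lemma grow_right (R : V → V → Prop) :
    ∀ (k : ℕ) (p : List V), Fintype.card V ≤ p.length + k → p ≠ [] → p.Nodup →
      p.Chain' R →
    HasDicycle R ∨ ∃ q : List V, q ≠ [] ∧ q.Nodup ∧ q.Chain' R ∧ q.head? = p.head? ∧
      p.length ≤ q.length ∧ ∃ x, q.getLast? = some x ∧ ∀ y, ¬ R x y := by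
  intro k
  induction k with
  | zero =>
    intro p hcard hne hnd hch
    by_cases hout : ∃ y, R (p.getLast hne) y
    · obtain ⟨y, hy⟩ := hout
      by_cases hyp : y ∈ p
      · -- cycle
        obtain ⟨s, t, rfl⟩ := List.append_of_mem hyp
        left
        have htne : (y :: t) ≠ [] := by simp
        refine ⟨y :: t, htne, ((List.suffix_append s (y :: t)).sublist).nodup hnd,
          hch.suffix (List.suffix_append _ _), (s ++ y :: t).getLast hne, y, by simp, ?_, ?_⟩
        · rw [List.getLast?_eq_getLast htne]
          congr 1
          exact (List.getLast_append_of_ne_nil _ htne).symm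
        · exact hy
      · -- extension impossible: length bound
        exfalso
        have h1 : (p ++ [y]).Nodup := by
          rw [List.nodup_append]
          exact ⟨hnd, by simp, by simp [List.disjoint_singleton]; exact fun a ha h => hyp (h ▸ ha)⟩
        have := h1.length_le_card
        simp at this
        omega
    · push_neg at hout
      right
      exact ⟨p, hne, hnd, hch, rfl, le_rfl, p.getLast hne,
        List.getLast?_eq_getLast hne, hout⟩
  | succ k ih =>
    intro p hcard hne hnd hch
    by_cases hout : ∃ y, R (p.getLast hne) y
    · obtain ⟨y, hy⟩ := hout
      by_cases hyp : y ∈ p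
      · obtain ⟨s, t, rfl⟩ := List.append_of_mem hyp
        left
        have htne : (y :: t) ≠ [] := by simp
        refine ⟨y :: t, htne, ((List.suffix_append s (y :: t)).sublist).nodup hnd,
          hch.suffix (List.suffix_append _ _), (s ++ y :: t).getLast hne, y, by simp, ?_, ?_⟩
        · rw [List.getLast?_eq_getLast htne]
          congr 1
          exact (List.getLast_append_of_ne_nil _ htne).symm
        · exact hy
      · have h1 : (p ++ [y]).Nodup := by
          rw [List.nodup_append]
          exact ⟨hnd, by simp, by simp [List.disjoint_singleton]; exact fun a ha h => hyp (h ▸ ha)⟩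
        have h2 : (p ++ [y]).Chain' R := by
          refine List.isChain_append.2 ?_
          refine ⟨hch, by simp, ?_⟩
          intro a ha b hb
          simp at hb
          subst hb
          rw [List.getLast?_eq_getLast hne] at ha
          simp at ha
          subst ha
          exact hy
        rcases ih (p ++ [y]) (by simp; omega) (by simp) h1 h2 with h | ⟨q, h3, h4, h5, h6, h7, h8⟩
        · exact Or.inl h
        · right
          refine ⟨q, h3, h4, h5, ?_, by simp at h7; omega, h8⟩
          rw [h6, List.head?_append_of_ne_nil _ hne]
    · push_neg at hout
      right
      exact ⟨p, hne, hnd, hch, rfl, le_rfl, p.getLast hne,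
        List.getLast?_eq_getLast hne, hout⟩

end GrowMain

section GrowMain2
variable {V : Type*} [Fintype V] {R : V → V → Prop}

lemma hasDicycle_flip (h : HasDicycle (flip R)) : HasDicycle R := by
  obtain ⟨c, hne, hnd, hch, x, y, hh, hl, hxy⟩ := h
  refine ⟨c.reverse, by simpa using hne, (List.nodup_reverse.2 hnd), ?_, y, x, ?_, ?_, hxy⟩
  · refine List.isChain_reverse.2 ?_; exact hch
  · rw [List.head?_reverse]; exact hl
  · rw [List.getLast?_reverse]; exact hh

lemma cycle_or_maxpath (R : V → V → Prop) {a b : V} (hab : R a b) (hne : a ≠ b) :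
    HasDicycle R ∨ ∃ (q : List V) (u v : V), q.Nodup ∧ q.Chain' R ∧ q.head? = some u ∧
      q.getLast? = some v ∧ 2 ≤ q.length ∧ (∀ x, ¬ R x u) ∧ (∀ y, ¬ R v y) := by
  have h0 : ([a, b] : List V).Nodup := by simp [hne]
  have hch0 : ([a, b] : List V).Chain' R := List.isChain_pair.2 hab
  rcases grow_right R (Fintype.card V) [a, b] (by simp) (by simp) h0 hch0 with h | h
  · exact Or.inl h
  obtain ⟨q1, h1ne, h1nd, h1ch, h1h, h1len, x1, h1l, h1out⟩ := h
  have hrevch : q1.reverse.Chain' (flip R) := by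
    refine List.isChain_reverse.2 ?_; exact h1ch
  rcases grow_right (flip R) (Fintype.card V) q1.reverse (by simp) (by simpa using h1ne)
      (List.nodup_reverse.2 h1nd) hrevch with h | h
  · exact Or.inl (hasDicycle_flip h)
  obtain ⟨q2, h2ne, h2nd, h2ch, h2h, h2len, x2, h2l, h2out⟩ := h
  right
  refine ⟨q2.reverse, x2, x1, (List.nodup_reverse.2 h2nd), ?_, ?_, ?_, ?_, ?_, ?_⟩
  · refine List.isChain_reverse.2 ?_; exact h2ch
  · rw [List.head?_reverse]; exact h2l
  · rw [List.getLast?_reverse]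
    rw [h2h, List.head?_reverse]
    exact h1l
  · simp at h1len h2len ⊢
    omega
  · intro x hx
    exact h2out x hx
  · exact h1out

end GrowMain2

section Split
variable {V : Type*} [Fintype V] {G : SimpleGraph V}

lemma indeg_split (D1 D : GraphOrientation G) (w : V) :
    indeg D1 w = {x | D1.arc x w ∧ D.arc x w}.ncard + {x | D1.arc x w ∧ D.arc w x}.ncard := by
  have hun : {x | D1.arc x w} = {x | D1.arc x w ∧ D.arc x w} ∪ {x | D1.arc x w ∧ D.arc w x} := by
    ext x
    simp only [Set.mem_setOf_eq, Set.mem_union]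
    constructor
    · intro h
      have hadj : G.Adj x w := (D1.adj_iff x w).2 (Or.inl h)
      rcases (D.adj_iff x w).1 hadj with h' | h'
      · exact Or.inl ⟨h, h'⟩
      · exact Or.inr ⟨h, h'⟩
    · rintro (⟨h, -⟩ | ⟨h, -⟩) <;> exact h
  have hdisj : Disjoint {x | D1.arc x w ∧ D.arc x w} {x | D1.arc x w ∧ D.arc w x} := by
    rw [Set.disjoint_left]
    rintro x ⟨-, h1⟩ ⟨-, h2⟩
    exact D.asymm x w h1 h2
  rw [indeg, hun, Set.ncard_union_eq hdisj (Set.toFinite _) (Set.toFinite _)]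

lemma indeg_diff (D1 D : GraphOrientation G) (w : V) :
    indeg D1 w + {x | D.arc x w ∧ D1.arc w x}.ncard
      = indeg D w + {x | D1.arc x w ∧ D.arc w x}.ncard := by
  rw [indeg_split D1 D w, indeg_split D D1 w,
    show {x | D.arc x w ∧ D1.arc x w} = {x | D1.arc x w ∧ D.arc x w} from
      Set.ext fun x => and_comm]
  ring

noncomputable def degMS (D : GraphOrientation G) : Multiset ℕ := Finset.univ.val.map (indeg D)

lemma degSeq_eq_desc (D : GraphOrientation G) : degSeq D = desc (degMS D) := rfl

lemma univ_decomp [DecidableEq V] (u v : V) (huv : u ≠ v) :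
    (Finset.univ.val : Multiset V)
      = u ::ₘ v ::ₘ ((Finset.univ.val.erase u).erase v) := by
  have h1 : (Finset.univ.val : Multiset V) = u ::ₘ Finset.univ.val.erase u :=
    (Multiset.cons_erase (by simp)).symm
  have h2 : (Finset.univ.val.erase u : Multiset V)
      = v ::ₘ (Finset.univ.val.erase u).erase v := by
    refine (Multiset.cons_erase ?_).symm
    rw [Multiset.mem_erase_of_ne huv.symm]
    simp
  conv_lhs => rw [h1]
  exact congrArg (fun M => u ::ₘ M) h2

lemma mem_rest_ne [DecidableEq V] {u v w : V} (huv : u ≠ v)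
    (hw : w ∈ (Finset.univ.val.erase u).erase v) : w ≠ u ∧ w ≠ v := by
  have hnd : (Finset.univ.val : Multiset V).Nodup := Finset.univ.nodup
  constructor
  · rintro rfl
    exact hnd.notMem_erase (Multiset.mem_of_mem_erase hw)
  · rintro rfl
    exact (hnd.erase _).notMem_erase hw

lemma degMS_decomp [DecidableEq V] (D : GraphOrientation G) (u v : V) (huv : u ≠ v) :
    degMS D = indeg D u ::ₘ indeg D v ::ₘ ((Finset.univ.val.erase u).erase v).map (indeg D) := by
  rw [degMS]
  conv_lhs => rw [univ_decomp u v huv]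
  simp

end Split

section MainProof
variable {V : Type*} [Fintype V] {G : SimpleGraph V}

lemma rtg_of_chain_head {R : V → V → Prop} {p : List V} {u v : V} (hch : p.Chain' R)
    (hh : p.head? = some u) (hl : p.getLast? = some v) : Relation.ReflTransGen R u v := by
  cases p with
  | nil => simp at hh
  | cons a t =>
    simp only [List.head?_cons, Option.some.injEq] at hh
    subst hh
    exact rtg_of_chain' t a v hch hl

lemma rtg_of_chain_head_rev {R S : V → V → Prop} (hRS : ∀ a b, R a b → S b a)
    {p : List V} {u v : V} (hch : p.Chain' R)
    (hh : p.head? = some u) (hl : p.getLast? = some v) : Relation.ReflTransGen S v u := by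
  cases p with
  | nil => simp at hh
  | cons a t =>
    simp only [List.head?_cons, Option.some.injEq] at hh
    subst hh
    exact rtg_of_chain'_rev hRS t a v hch hl

/-- A lex-minimal orientation has no reversible path. -/
lemma noRev_of_lexmin (D1 : GraphOrientation G)
    (hlex : ∀ D' : GraphOrientation G, lexLE (degSeq D1) (degSeq D')) :
    NoReversiblePath D1 := by
  classical
  intro u v hreach
  by_contra hlt
  push_neg at hlt
  have huv : u ≠ v := by rintro rfl; omega
  obtain ⟨p, hnd, hch, hh, hl⟩ := exists_nodup_chain_of_rtg hreach
  have hpne : p ≠ [] := by rintro rfl; simp at hh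
  have hhu : p.head hpne = u := by
    rw [List.head?_eq_head hpne] at hh; exact Option.some_injective _ hh
  have hlv : p.getLast hpne = v := by
    rw [List.getLast?_eq_getLast hpne] at hl; exact Option.some_injective _ hl
  have hlen : 2 ≤ p.length := by
    rcases p with - | ⟨a, t⟩
    · simp at hh
    rcases t with - | ⟨b, t'⟩
    · exfalso
      apply huv
      simp only [List.head?_cons, Option.some.injEq] at hh
      simp only [List.getLast?_singleton, Option.some.injEq] at hl
      rw [← hh, ← hl]
    · simp
  have hA : ∀ e ∈ pathArcs p, D1.arc e.1 e.2 := chain'_pathArcs hch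
  obtain ⟨hu1, hv1, hoth⟩ := indeg_reverseOr_path D1 hnd hpne hlen hA
  rw [hhu] at hu1
  rw [hlv] at hv1
  have hoth' : ∀ w, w ≠ u → w ≠ v → indeg (reverseOr D1 (pathArcs p) hA) w = indeg D1 w := by
    intro w h1 h2
    exact hoth w (by rw [hhu]; exact h1) (by rw [hlv]; exact h2)
  have hrest : (((Finset.univ.val.erase u).erase v).map (indeg (reverseOr D1 (pathArcs p) hA)))
      = ((Finset.univ.val.erase u).erase v).map (indeg D1) :=
    Multiset.map_congr rfl (fun w hw => hoth' w (mem_rest_ne huv hw).1 (mem_rest_ne huv hw).2)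
  have hlex' : List.Lex (· < ·) (degSeq (reverseOr D1 (pathArcs p) hA)) (degSeq D1) := by
    rw [degSeq_eq_desc, degSeq_eq_desc, degMS_decomp _ u v huv, degMS_decomp _ u v huv,
      hrest, hu1, show indeg (reverseOr D1 (pathArcs p) hA) v = indeg D1 v - 1 from by omega]
    exact desc_lex_lt _ (indeg D1 u) (indeg D1 v) (by omega)
  rcases hlex (reverseOr D1 (pathArcs p) hA) with h | h
  · rw [h] at hlex'
    exact lex_asymm hlex' hlex'
  · exact lex_asymm hlex' h

def diffSet (D1 D : GraphOrientation G) : Set (V × V) := {e | D1.arc e.1 e.2 ∧ D.arc e.2 e.1}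

lemma diffSet_reversal (D1 D : GraphOrientation G) (A : List (V × V))
    (hA1 : ∀ a ∈ A, D1.arc a.1 a.2) (hA2 : ∀ a ∈ A, D.arc a.2 a.1) :
    diffSet (reverseOr D1 A hA1) D = diffSet D1 D \ {e | e ∈ A} := by
  ext ⟨x, y⟩
  simp only [diffSet, Set.mem_setOf_eq, Set.mem_diff, reverseOr_arc]
  constructor
  · rintro ⟨(⟨h1, h2⟩ | h1), h3⟩
    · exact ⟨⟨h1, h3⟩, h2⟩
    · exact absurd h3 (D.asymm x y (hA2 _ h1))
  · rintro ⟨⟨h1, h2⟩, h3⟩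
    exact ⟨Or.inl ⟨h1, h3⟩, h2⟩

lemma main_aux (D : GraphOrientation G) (hD : NoReversiblePath D) :
    ∀ n (D1 : GraphOrientation G), (∀ D' : GraphOrientation G, lexLE (degSeq D1) (degSeq D')) →
      (diffSet D1 D).ncard = n →
      Relation.ReflTransGen
        (fun X Y : GraphOrientation G => WeakReversal X Y ∨ CycleReversal X Y) D1 D := by
  classical
  intro n
  induction n using Nat.strong_induction_on with
  | _ n ih =>
  intro D1 hlex1 hcard
  by_cases hempty : diffSet D1 D = ∅
  · have hEq : D1 = D := by
      apply GraphOrientation.ext'_s1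
      intro x y
      constructor
      · intro h
        by_contra h'
        have hadj : G.Adj x y := (D1.adj_iff x y).2 (Or.inl h)
        rcases (D.adj_iff x y).1 hadj with h2 | h2
        · exact h' h2
        · have hm : ((x, y) : V × V) ∈ diffSet D1 D := ⟨h, h2⟩
          rw [hempty] at hm; exact hm
      · intro h
        by_contra h'
        have hadj : G.Adj x y := (D.adj_iff x y).2 (Or.inl h)
        rcases (D1.adj_iff x y).1 hadj with h2 | h2
        · exact h' h2
        · have hm : ((y, x) : V × V) ∈ diffSet D1 D := ⟨h2, h⟩
          rw [hempty] at hm; exact hm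
    rw [hEq]
  · obtain ⟨⟨a, b⟩, hab1, hab2⟩ := Set.nonempty_iff_ne_empty.2 hempty
    have hRab : (fun x y => D1.arc x y ∧ D.arc y x) a b := ⟨hab1, hab2⟩
    have hane : a ≠ b := by rintro rfl; exact arc_irrefl D1 a hab1
    rcases cycle_or_maxpath (fun x y => D1.arc x y ∧ D.arc y x) hRab hane with hcyc | hpath
    · -- cycle reversal case
      obtain ⟨c, hcne, hcnd, hcch, x, y, hch?, hcl?, hxy⟩ := hcyc
      have hhy : c.head hcne = y := by
        rw [List.head?_eq_head hcne] at hch?; exact Option.some_injective _ hch?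
      have hlx : c.getLast hcne = x := by
        rw [List.getLast?_eq_getLast hcne] at hcl?; exact Option.some_injective _ hcl?
      have hAR : ∀ e ∈ cycleArcs c, D1.arc e.1 e.2 ∧ D.arc e.2 e.1 := by
        rw [cycleArcs_eq c hcne]
        intro e he
        rcases List.mem_append.1 he with he | he
        · exact chain'_pathArcs hcch e he
        · simp only [List.mem_singleton] at he
          subst he
          rw [hlx, hhy]
          exact hxy
      have hA1 : ∀ e ∈ cycleArcs c, D1.arc e.1 e.2 := fun e he => (hAR e he).1
      have hA2 : ∀ e ∈ cycleArcs c, D.arc e.2 e.1 := fun e he => (hAR e he).2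
      have hstep : CycleReversal D1 (reverseOr D1 (cycleArcs c) hA1) :=
        ⟨c, hcne, hcnd, hA1, fun u v => Iff.rfl⟩
      have hdeg : degSeq (reverseOr D1 (cycleArcs c) hA1) = degSeq D1 := by
        rw [degSeq_eq_desc, degSeq_eq_desc]
        congr 1
        exact Multiset.map_congr rfl (fun w _ => indeg_reverseOr_cycle D1 hcnd hcne hA1 w)
      have hdiff : diffSet (reverseOr D1 (cycleArcs c) hA1) D
          = diffSet D1 D \ {e | e ∈ cycleArcs c} := diffSet_reversal D1 D _ hA1 hA2
      have hmemA : ((c.getLast hcne, c.head hcne) : V × V) ∈ cycleArcs c := by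
        rw [cycleArcs_eq c hcne]; simp
      have hlt : (diffSet (reverseOr D1 (cycleArcs c) hA1) D).ncard < n := by
        rw [← hcard, hdiff]
        apply Set.ncard_lt_ncard _ (Set.toFinite _)
        rw [Set.ssubset_iff_of_subset Set.diff_subset]
        exact ⟨_, hAR _ hmemA, fun hc => hc.2 hmemA⟩
      have hlex1' : ∀ D'' : GraphOrientation G, lexLE (degSeq (reverseOr D1 (cycleArcs c) hA1)) (degSeq D'') := by
        intro D''; rw [hdeg]; exact hlex1 D''
      exact Relation.ReflTransGen.head (Or.inr hstep) (ih _ hlt _ hlex1' rfl)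
    · -- weak reversal case
      obtain ⟨q, u, v, hqnd, hqch, hqh, hql, hqlen, hnoin, hnoout⟩ := hpath
      have hqne : q ≠ [] := by rintro rfl; simp at hqh
      have hqhu : q.head hqne = u := by
        rw [List.head?_eq_head hqne] at hqh; exact Option.some_injective _ hqh
      have hqlv : q.getLast hqne = v := by
        rw [List.getLast?_eq_getLast hqne] at hql; exact Option.some_injective _ hql
      have huv : u ≠ v := by
        rw [← hqhu, ← hqlv]; exact head_ne_getLast hqnd hqne hqlen
      have hAR : ∀ e ∈ pathArcs q, D1.arc e.1 e.2 ∧ D.arc e.2 e.1 := chain'_pathArcs hqch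
      have hA1 : ∀ e ∈ pathArcs q, D1.arc e.1 e.2 := fun e he => (hAR e he).1
      have hA2 : ∀ e ∈ pathArcs q, D.arc e.2 e.1 := fun e he => (hAR e he).2
      -- second vertex of q
      obtain ⟨a2, t, rfl⟩ : ∃ a2 t, q = u :: a2 :: t := by
        rcases q with - | ⟨a1, tq⟩
        · simp at hqne
        · have h : a1 = u := by simpa using hqh
          subst h
          rcases tq with - | ⟨a2, t⟩
          · simp at hqlen
          · exact ⟨a2, t, rfl⟩
      have hRs : D1.arc u a2 ∧ D.arc a2 u := (List.isChain_cons_cons.1 hqch).1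
      -- indegree inequalities
      have hdu := indeg_diff D1 D u
      have hdv := indeg_diff D1 D v
      have hinu : ({x | D1.arc x u ∧ D.arc u x} : Set V) = ∅ := by
        ext z
        simp only [Set.mem_setOf_eq, Set.mem_empty_iff_false, iff_false]
        exact hnoin z
      have houtu : 1 ≤ ({x | D.arc x u ∧ D1.arc u x} : Set V).ncard := by
        rw [Nat.one_le_iff_ne_zero, ← Nat.pos_iff_ne_zero, Set.ncard_pos (Set.toFinite _)]
        exact ⟨a2, hRs.2, hRs.1⟩
      have houtv : ({x | D.arc x v ∧ D1.arc v x} : Set V) = ∅ := by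
        ext z
        simp only [Set.mem_setOf_eq, Set.mem_empty_iff_false, iff_false]
        rintro ⟨h1, h2⟩
        exact hnoout z ⟨h2, h1⟩
      have hinv : 1 ≤ ({x | D1.arc x v ∧ D.arc v x} : Set V).ncard := by
        rw [Nat.one_le_iff_ne_zero, ← Nat.pos_iff_ne_zero, Set.ncard_pos (Set.toFinite _)]
        obtain ⟨x0, hx0⟩ := inSet_singleton_of_mem_tail hqnd (getLast_mem_tail hqlen hqne)
        have hx0m : (x0, (u :: a2 :: t).getLast hqne) ∈ pathArcs (u :: a2 :: t) := by
          have : x0 ∈ inSet (pathArcs (u :: a2 :: t)) ((u :: a2 :: t).getLast hqne) := by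
            rw [hx0]; rfl
          exact this
        rw [hqlv] at hx0m
        exact ⟨x0, hAR _ hx0m⟩
      have hrtg1 : Relation.ReflTransGen D1.arc u v :=
        rtg_of_chain_head (hqch.imp (fun a b h => h.1)) hqh hql
      have hrtg2 : Relation.ReflTransGen D.arc v u :=
        rtg_of_chain_head_rev (fun a b h => h.2) hqch hqh hql
      have hnr1 := noRev_of_lexmin D1 hlex1 u v hrtg1
      have hnr2 := hD v u hrtg2
      rw [hinu, Set.ncard_empty] at hdu
      rw [houtv, Set.ncard_empty] at hdv
      have heq : indeg D1 u + 1 = indeg D1 v := by omega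
      -- the weak reversal
      obtain ⟨hu1, hv1, hoth⟩ := indeg_reverseOr_path D1 hqnd hqne hqlen hA1
      rw [hqhu] at hu1
      rw [hqlv] at hv1
      have hstep : WeakReversal D1 (reverseOr D1 (pathArcs (u :: a2 :: t)) hA1) :=
        ⟨u :: a2 :: t, u, v, ⟨hqh, hql, hqnd, hqch.imp (fun a b h => h.1)⟩, heq,
          hA1, fun _ _ => Iff.rfl⟩
      have hoth' : ∀ w, w ≠ u → w ≠ v →
          indeg (reverseOr D1 (pathArcs (u :: a2 :: t)) hA1) w = indeg D1 w := by
        intro w h1 h2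
        exact hoth w (by rw [hqhu]; exact h1) (by rw [hqlv]; exact h2)
      have hdeg : degSeq (reverseOr D1 (pathArcs (u :: a2 :: t)) hA1) = degSeq D1 := by
        rw [degSeq_eq_desc, degSeq_eq_desc]
        congr 1
        rw [degMS_decomp _ u v huv, degMS_decomp _ u v huv,
          Multiset.map_congr rfl
            (fun w hw => hoth' w (mem_rest_ne huv hw).1 (mem_rest_ne huv hw).2),
          hu1, show indeg (reverseOr D1 (pathArcs (u :: a2 :: t)) hA1) v = indeg D1 u from by
            omega,
          heq]
        exact Multiset.cons_swap _ _ _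
      have hdiff : diffSet (reverseOr D1 (pathArcs (u :: a2 :: t)) hA1) D
          = diffSet D1 D \ {e | e ∈ pathArcs (u :: a2 :: t)} := diffSet_reversal D1 D _ hA1 hA2
      have hmemA : ((u, a2) : V × V) ∈ pathArcs (u :: a2 :: t) := by
        rw [pathArcs_cons_cons]; simp
      have hlt : (diffSet (reverseOr D1 (pathArcs (u :: a2 :: t)) hA1) D).ncard < n := by
        rw [← hcard, hdiff]
        apply Set.ncard_lt_ncard _ (Set.toFinite _)
        rw [Set.ssubset_iff_of_subset Set.diff_subset]
        exact ⟨_, hAR _ hmemA, fun hc => hc.2 hmemA⟩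
      have hlex1' : ∀ D'' : GraphOrientation G, lexLE (degSeq (reverseOr D1 (pathArcs (u :: a2 :: t)) hA1))
          (degSeq D'') := by
        intro D''; rw [hdeg]; exact hlex1 D''
      exact Relation.ReflTransGen.head (Or.inl hstep) (ih _ hlt _ hlex1' rfl)

end MainProof

/-- An orientation minimizing the lexicographic order of the indegree sequence can be
transformed into any orientation having no reversible path by a finite sequence of
weak reversals and cycle reversals. -/
theorem stmt_1 {V : Type*} [Fintype V] (G : SimpleGraph V)
    (Dlex D : GraphOrientation G)
    (hlex : ∀ D' : GraphOrientation G, lexLE (degSeq Dlex) (degSeq D'))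
    (hD : NoReversiblePath D) :
    Relation.ReflTransGen
      (fun X Y : GraphOrientation G => WeakReversal X Y ∨ CycleReversal X Y) Dlex D :=
  main_aux D hD (diffSet Dlex D).ncard Dlex hlex rfl
end

section
/- Let G be a finite undirected graph and let D be an orientation of G containing no reversible path. Then D minimizes the lexicographic order of the indegrees: for every orientation D' of G, the decreasingly sorted indegree sequence of D is lexicographically at most the decreasingly sorted indegree sequence of D'. -/
section AuxLemmas

open Finset

variable {V : Type*} [Fintype V] {G : SimpleGraph V}

open scoped Classical

set_option linter.unusedSectionVars false

lemma indeg_eq_card (D : GraphOrientation G) (v : V) :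
    indeg D v = (univ.filter (fun u => D.arc u v)).card := by
  have h : {u | D.arc u v} = ↑(univ.filter (fun u => D.arc u v)) := by
    ext u; simp
  rw [indeg, h, Set.ncard_coe_finset]

lemma sum_indeg_eq (D : GraphOrientation G) (S : Finset V) :
    ∑ v ∈ S, indeg D v = ((S ×ˢ univ).filter (fun p : V × V => D.arc p.2 p.1)).card := by
  rw [Finset.card_filter, Finset.sum_product]
  simp only [indeg_eq_card, Finset.card_filter]

lemma two_mul_arcs (D : GraphOrientation G) (S : Finset V) :
    2 * ((S ×ˢ S).filter (fun p : V × V => D.arc p.2 p.1)).card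
      = ((S ×ˢ S).filter (fun p : V × V => G.Adj p.1 p.2)).card := by
  have hdisj : Disjoint ((S ×ˢ S).filter (fun p : V × V => D.arc p.2 p.1))
      ((S ×ˢ S).filter (fun p : V × V => D.arc p.1 p.2)) := by
    rw [Finset.disjoint_left]
    intro p h1 h2
    rw [Finset.mem_filter] at h1 h2
    exact D.asymm _ _ h2.2 h1.2
  have hunion : (S ×ˢ S).filter (fun p : V × V => G.Adj p.1 p.2)
      = ((S ×ˢ S).filter (fun p : V × V => D.arc p.2 p.1))
        ∪ ((S ×ˢ S).filter (fun p : V × V => D.arc p.1 p.2)) := by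
    rw [← Finset.filter_or]
    apply Finset.filter_congr
    intro p _
    rw [D.adj_iff]
    tauto
  have hbij : ((S ×ˢ S).filter (fun p : V × V => D.arc p.1 p.2)).card
      = ((S ×ˢ S).filter (fun p : V × V => D.arc p.2 p.1)).card := by
    apply Finset.card_nbij' Prod.swap Prod.swap
    · intro p hp
      rw [Finset.mem_coe, Finset.mem_filter, Finset.mem_product] at hp ⊢
      exact ⟨⟨hp.1.2, hp.1.1⟩, hp.2⟩
    · intro p hp
      rw [Finset.mem_coe, Finset.mem_filter, Finset.mem_product] at hp ⊢
      exact ⟨⟨hp.1.2, hp.1.1⟩, hp.2⟩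
    · intro p _; exact Prod.swap_swap p
    · intro p _; exact Prod.swap_swap p
  rw [hunion, Finset.card_union_of_disjoint hdisj, hbij, two_mul]

/-- The key inequality: an orientation with no reversible path minimizes all
truncated indegree sums. -/
lemma truncSum_le (D D' : GraphOrientation G) (hD : NoReversiblePath D) (k : ℕ) :
    ∑ v : V, (indeg D v - k) ≤ ∑ v : V, (indeg D' v - k) := by
  set R : Finset V :=
    univ.filter (fun u => ∃ v, Relation.ReflTransGen D.arc u v ∧ k + 1 ≤ indeg D v) with hR
  have hmem : ∀ v, k + 1 ≤ indeg D v → v ∈ R := by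
    intro v hv
    rw [hR, Finset.mem_filter]
    exact ⟨Finset.mem_univ _, v, Relation.ReflTransGen.refl, hv⟩
  have hlow : ∀ v ∈ R, k ≤ indeg D v := by
    intro v hv
    rw [hR, Finset.mem_filter] at hv
    obtain ⟨-, w, hreach, hw⟩ := hv
    have := hD v w hreach
    omega
  have hclosed : ∀ u v, D.arc u v → v ∈ R → u ∈ R := by
    intro u v harc hv
    rw [hR, Finset.mem_filter] at hv ⊢
    obtain ⟨-, w, hreach, hw⟩ := hv
    exact ⟨Finset.mem_univ _, w, Relation.ReflTransGen.head harc hreach, hw⟩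
  have hDsum : ∑ v ∈ R, indeg D v
      = ((R ×ˢ R).filter (fun p : V × V => D.arc p.2 p.1)).card := by
    rw [sum_indeg_eq]
    congr 1
    ext p
    rw [Finset.mem_filter, Finset.mem_filter, Finset.mem_product, Finset.mem_product]
    constructor
    · rintro ⟨⟨h1, -⟩, h2⟩
      exact ⟨⟨h1, hclosed _ _ h2 h1⟩, h2⟩
    · rintro ⟨⟨h1, -⟩, h2⟩
      exact ⟨⟨h1, Finset.mem_univ _⟩, h2⟩
  have hAeq : ((R ×ˢ R).filter (fun p : V × V => D.arc p.2 p.1)).card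
      = ((R ×ˢ R).filter (fun p : V × V => D'.arc p.2 p.1)).card := by
    have h1 := two_mul_arcs D R
    have h2 := two_mul_arcs D' R
    omega
  have hD'sum : ((R ×ˢ R).filter (fun p : V × V => D'.arc p.2 p.1)).card
      ≤ ∑ v ∈ R, indeg D' v := by
    rw [sum_indeg_eq]
    apply Finset.card_le_card
    apply Finset.filter_subset_filter
    exact Finset.product_subset_product (Finset.Subset.refl _) (Finset.subset_univ _)
  have hRsum : ∑ v ∈ R, indeg D v ≤ ∑ v ∈ R, indeg D' v := by
    rw [hDsum, hAeq]; exact hD'sum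
  have hleft : ∑ v : V, (indeg D v - k) = ∑ v ∈ R, (indeg D v - k) := by
    apply (Finset.sum_subset (Finset.subset_univ R) _).symm
    intro v _ hv
    have : indeg D v ≤ k := by
      by_contra h
      exact hv (hmem v (by omega))
    omega
  have hsub1 : ∑ v ∈ R, (indeg D v - k) + k * R.card = ∑ v ∈ R, indeg D v := by
    rw [Finset.card_eq_sum_ones R, Finset.mul_sum, ← Finset.sum_add_distrib]
    apply Finset.sum_congr rfl
    intro v hv
    have := hlow v hv
    omega
  have hsub2 : ∑ v ∈ R, indeg D' v ≤ ∑ v ∈ R, (indeg D' v - k) + k * R.card := by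
    rw [Finset.card_eq_sum_ones R, Finset.mul_sum, ← Finset.sum_add_distrib]
    apply Finset.sum_le_sum
    intro v _
    omega
  have hright : ∑ v ∈ R, (indeg D' v - k) ≤ ∑ v : V, (indeg D' v - k) :=
    Finset.sum_le_sum_of_subset (Finset.subset_univ R)
  omega

lemma lex_of_truncSums : ∀ (l₁ l₂ : List ℕ), l₁.length = l₂.length →
    l₂.Pairwise (· ≥ ·) →
    (∀ k, (l₁.map (· - k)).sum ≤ (l₂.map (· - k)).sum) → lexLE l₁ l₂ := by
  intro l₁
  induction l₁ with
  | nil =>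
    intro l₂ hlen _ _
    have : l₂ = [] := by
      cases l₂ with
      | nil => rfl
      | cons b t => simp at hlen
    subst this; left; rfl
  | cons a t₁ ih =>
    intro l₂ hlen hsort hsum
    cases l₂ with
    | nil => simp at hlen
    | cons b t₂ =>
      rcases lt_trichotomy a b with h | h | h
      · right; exact List.Lex.rel h
      · subst h
        have hlen' : t₁.length = t₂.length := by simpa using hlen
        have hsort' : t₂.Pairwise (· ≥ ·) := hsort.tail
        have hsum' : ∀ k, (t₁.map (· - k)).sum ≤ (t₂.map (· - k)).sum := by
          intro k
          have := hsum k
          simp only [List.map_cons, List.sum_cons] at this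
          omega
        rcases ih t₂ hlen' hsort' hsum' with heq | hlex
        · left; rw [heq]
        · right; exact List.Lex.cons hlex
      · exfalso
        have h1 := hsum b
        have h2 : ((b :: t₂).map (· - b)).sum = 0 := by
          rw [List.sum_eq_zero]
          intro x hx
          simp only [List.map_cons, List.mem_cons, List.mem_map] at hx
          rcases hx with hx | ⟨y, hy, hxy⟩
          · omega
          · have : b ≥ y := (List.pairwise_cons.mp hsort).1 y hy
            omega
        rw [h2] at h1
        simp only [List.map_cons, List.sum_cons] at h1
        omega

lemma degSeq_sorted (D : GraphOrientation G) : (degSeq D).Pairwise (· ≥ ·) := by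
  rw [degSeq, List.pairwise_reverse]
  exact Multiset.pairwise_sort _ (· ≤ ·)

lemma degSeq_length (D : GraphOrientation G) : (degSeq D).length = Fintype.card V := by
  rw [degSeq, List.length_reverse, Multiset.length_sort, Multiset.card_map]
  rfl

lemma degSeq_truncSum (D : GraphOrientation G) (k : ℕ) :
    ((degSeq D).map (· - k)).sum = ∑ v : V, (indeg D v - k) := by
  have h : (((Finset.univ.val.map (indeg D)).sort (· ≤ ·) : List ℕ) : Multiset ℕ)
      = Finset.univ.val.map (indeg D) := Multiset.sort_eq _ _
  rw [degSeq, List.map_reverse, List.sum_reverse]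
  rw [show ∀ (l : List ℕ), (l.map (· - k)).sum = ((l : Multiset ℕ).map (· - k)).sum
    from fun l => by simp]
  rw [h, Multiset.map_map]
  rfl

end AuxLemmas

/-- An orientation with no reversible path minimizes the lexicographic order of the
decreasingly sorted indegree sequence among all orientations. -/
theorem stmt_2 {V : Type*} [Fintype V] (G : SimpleGraph V)
    (D : GraphOrientation G) (hD : NoReversiblePath D) :
    ∀ D' : GraphOrientation G, lexLE (degSeq D) (degSeq D') := by
  intro D'
  apply lex_of_truncSums
  · rw [degSeq_length, degSeq_length]
  · exact degSeq_sorted D'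
  · intro k
    rw [degSeq_truncSum, degSeq_truncSum]
    exact truncSum_le D D' hD k
end

section
/- Let G be a finite undirected graph and let D be an orientation of G containing no reversible path. Then D minimizes the maximum indegree: for every orientation D' of G, the maximum indegree over all vertices in D is at most the maximum indegree over all vertices in D'. -/
/-- An orientation with no reversible path minimizes the maximum indegree among
all orientations. -/
theorem stmt_3 {V : Type*} [Fintype V] (G : SimpleGraph V)
    (D : GraphOrientation G) (hD : NoReversiblePath D) :
    ∀ D' : GraphOrientation G,
      Finset.univ.sup (indeg D) ≤ Finset.univ.sup (indeg D') := by
  classical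
  intro D'
  by_contra hcon
  push_neg at hcon
  -- hcon : univ.sup (indeg D') < univ.sup (indeg D)
  have hne : (Finset.univ : Finset V).Nonempty := by
    rcases (Finset.univ : Finset V).eq_empty_or_nonempty with he | hne
    · rw [he] at hcon; simp at hcon
    · exact hne
  obtain ⟨v, -, hv⟩ := Finset.exists_mem_eq_sup (Finset.univ : Finset V) hne (indeg D)
  set k : ℕ := Finset.univ.sup (indeg D) with hkdef
  set M : ℕ := Finset.univ.sup (indeg D') with hMdef
  -- hv : k = indeg D v
  set S : Finset V := Finset.univ.filter (fun u => Relation.ReflTransGen D.arc u v) with hSdef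
  have hS_mem : ∀ u, u ∈ S ↔ Relation.ReflTransGen D.arc u v := by
    intro u; simp [hSdef]
  have hvS : v ∈ S := (hS_mem v).mpr Relation.ReflTransGen.refl
  have hS_closed : ∀ u ∈ S, ∀ w, D.arc w u → w ∈ S := by
    intro u hu w hw
    rw [hS_mem] at hu ⊢
    exact Relation.ReflTransGen.head hw hu
  have hind : ∀ (E : GraphOrientation G) (u : V),
      indeg E u = (Finset.univ.filter (fun w => E.arc w u)).card := by
    intro E u
    rw [indeg, ← Set.ncard_coe_finset]
    congr 1
    ext w
    simp
  -- arcs within S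
  set T : GraphOrientation G → Finset (V × V) :=
    fun E => (S ×ˢ S).filter (fun p => E.arc p.1 p.2) with hTdef
  have hTsum : ∀ E : GraphOrientation G,
      (T E).card = ∑ u ∈ S, (S.filter (fun w => E.arc w u)).card := by
    intro E
    have H : ∀ p ∈ T E, (p : V × V).2 ∈ S := by
      intro p hp
      simp only [hTdef, Finset.mem_filter, Finset.mem_product] at hp
      exact hp.1.2
    rw [Finset.card_eq_sum_card_fiberwise H]
    refine Finset.sum_congr rfl ?_
    intro u hu
    have himg : (T E).filter (fun p => p.2 = u)
        = (S.filter (fun w => E.arc w u)).image (fun w => (w, u)) := by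
      ext ⟨a, b⟩
      simp only [hTdef, Finset.mem_filter, Finset.mem_product, Finset.mem_image,
        Prod.mk.injEq]
      constructor
      · rintro ⟨⟨⟨ha, hb⟩, harc⟩, rfl⟩
        exact ⟨a, ⟨ha, harc⟩, rfl, rfl⟩
      · rintro ⟨w, ⟨hw, harc⟩, rfl, rfl⟩
        exact ⟨⟨⟨hw, hu⟩, harc⟩, rfl⟩
    rw [himg, Finset.card_image_of_injective]
    intro a b hab
    exact (Prod.mk.injEq _ _ _ _).mp hab |>.1
  -- T D has at most as many arcs as T D'
  have hTle : (T D).card ≤ (T D').card := by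
    apply Finset.card_le_card_of_injOn (fun p => if D'.arc p.1 p.2 then p else p.swap)
    · intro p hp
      simp only [hTdef, Finset.mem_coe, Finset.mem_filter, Finset.mem_product] at hp ⊢
      obtain ⟨⟨h1, h2⟩, harc⟩ := hp
      have hadj : G.Adj p.1 p.2 := (D.adj_iff p.1 p.2).mpr (Or.inl harc)
      by_cases h' : D'.arc p.1 p.2
      · rw [if_pos h']; exact ⟨⟨h1, h2⟩, h'⟩
      · rw [if_neg h']
        have : D'.arc p.1 p.2 ∨ D'.arc p.2 p.1 := (D'.adj_iff p.1 p.2).mp hadj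
        rcases this with h'' | h''
        · exact absurd h'' h'
        · exact ⟨⟨h2, h1⟩, h''⟩
    · intro p hp q hq hpq
      simp only [hTdef, Finset.coe_filter, Set.mem_setOf_eq, Finset.mem_product] at hp hq
      simp only at hpq
      by_cases h1 : D'.arc p.1 p.2 <;> by_cases h2 : D'.arc q.1 q.2
      · rw [if_pos h1, if_pos h2] at hpq; exact hpq
      · rw [if_pos h1, if_neg h2] at hpq
        exfalso
        have hqp : q = p.swap := by rw [hpq]; simp
        have := hq.2
        rw [hqp] at this
        exact D.asymm _ _ hp.2 this
      · rw [if_neg h1, if_pos h2] at hpq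
        exfalso
        have hqp : q = p.swap := hpq.symm
        have := hq.2
        rw [hqp] at this
        exact D.asymm _ _ hp.2 this
      · rw [if_neg h1, if_neg h2] at hpq
        exact Prod.swap_injective hpq
  -- within S, indegree in D counts exactly all in-arcs
  have hfull : ∀ u ∈ S, (S.filter (fun w => D.arc w u)).card = indeg D u := by
    intro u hu
    rw [hind]
    congr 1
    ext w
    simp only [Finset.mem_filter, Finset.mem_univ, true_and]
    exact ⟨fun h => h.2, fun h => ⟨hS_closed u hu w h, h⟩⟩
  have hDcount : ∑ u ∈ S, indeg D u = (T D).card := by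
    rw [hTsum]
    exact Finset.sum_congr rfl (fun u hu => (hfull u hu).symm)
  have hD'count : (T D').card ≤ ∑ u ∈ S, indeg D' u := by
    rw [hTsum]
    refine Finset.sum_le_sum ?_
    intro u hu
    rw [hind]
    apply Finset.card_le_card
    intro w hw
    simp only [Finset.mem_filter, Finset.mem_univ, true_and] at hw ⊢
    exact hw.2
  have hupper : ∑ u ∈ S, indeg D' u ≤ S.card * M := by
    calc ∑ u ∈ S, indeg D' u ≤ ∑ _u ∈ S, M :=
          Finset.sum_le_sum (fun u _ => Finset.le_sup (Finset.mem_univ u))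
      _ = S.card * M := by rw [Finset.sum_const, smul_eq_mul]
  -- lower bound on the D-sum
  have hk1 : 1 ≤ k := by omega
  have hlow : ∀ u ∈ S, k - 1 ≤ indeg D u := by
    intro u hu
    have := hD u v ((hS_mem u).mp hu)
    rw [← hv] at this
    omega
  have hsplit : ∑ u ∈ S, indeg D u
      = ∑ u ∈ S \ {v}, indeg D u + indeg D v :=
    Finset.sum_eq_sum_sdiff_singleton_add hvS _
  have hcardS : (S \ {v}).card = S.card - 1 := by
    rw [Finset.card_sdiff_of_subset (Finset.singleton_subset_iff.mpr hvS), Finset.card_singleton]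
  have hlow2 : (S.card - 1) * (k - 1) + k ≤ ∑ u ∈ S, indeg D u := by
    rw [hsplit, ← hv]
    have : (S \ {v}).card • (k - 1) ≤ ∑ u ∈ S \ {v}, indeg D u :=
      Finset.card_nsmul_le_sum _ _ _ (fun u hu => hlow u (Finset.mem_sdiff.mp hu).1)
    rw [hcardS, smul_eq_mul] at this
    omega
  -- put it all together
  have hchain : (S.card - 1) * (k - 1) + k ≤ S.card * M := by
    calc (S.card - 1) * (k - 1) + k ≤ ∑ u ∈ S, indeg D u := hlow2
      _ = (T D).card := hDcount
      _ ≤ (T D').card := hTle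
      _ ≤ ∑ u ∈ S, indeg D' u := hD'count
      _ ≤ S.card * M := hupper
  have hc1 : 1 ≤ S.card := Finset.card_pos.mpr ⟨v, hvS⟩
  obtain ⟨c, hc⟩ : ∃ c, S.card = c + 1 := ⟨S.card - 1, by omega⟩
  rw [hc] at hchain
  simp only [Nat.add_sub_cancel] at hchain
  have hMk : M ≤ k - 1 := by omega
  have h2 : (c + 1) * M ≤ c * (k - 1) + (k - 1) := by
    calc (c + 1) * M ≤ (c + 1) * (k - 1) := Nat.mul_le_mul_left _ hMk
      _ = c * (k - 1) + (k - 1) := by ring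
  set a := c * (k - 1) with ha
  set b := (c + 1) * M with hb
  omega
end

section
/- Let G be a finite undirected graph, let f : ℕ → ℝ be increasing and strictly convex (i.e., f(i+1) − f(i) is strictly increasing in i), and let D be an orientation of G containing no reversible path. Then D minimizes the objective F(D) = Σ_{v ∈ V} f(δ_D(v)): for every orientation D' of G, Σ_v f(δ_D(v)) ≤ Σ_v f(δ_{D'}(v)). -/
section Aux
open Finset
open scoped Classical

variable {V : Type*} [Fintype V] {G : SimpleGraph V}

noncomputable def arcSet (D : GraphOrientation G) : Finset (V × V) :=
  univ.filter fun p => D.arc p.1 p.2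

lemma indeg_eq (D : GraphOrientation G) (v : V) :
    indeg D v = ((arcSet D).filter fun p => p.2 = v).card := by
  have h1 : {u | D.arc u v} = ↑(univ.filter fun u : V => D.arc u v) := by
    ext u; simp
  rw [indeg, h1, Set.ncard_coe_finset]
  apply Finset.card_bij (fun u _ => (u, v))
  · intro u hu
    simp only [mem_filter, mem_univ, true_and] at hu
    simp [arcSet, hu]
  · intro a ha b hb h
    simpa using congrArg Prod.fst h
  · intro p hp
    simp only [arcSet, mem_filter, mem_univ, true_and] at hp
    obtain ⟨ha, hv⟩ := hp
    subst hv
    exact ⟨p.1, by simp [ha], by simp⟩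

lemma sum_indeg (D : GraphOrientation G) (S : Finset V) :
    ∑ v ∈ S, indeg D v = ((arcSet D).filter fun p => p.2 ∈ S).card := by
  rw [Finset.card_eq_sum_card_fiberwise (f := Prod.snd) (t := S)
    (by intro p hp; exact (mem_filter.mp hp).2)]
  apply Finset.sum_congr rfl
  intro v hv
  rw [indeg_eq, Finset.filter_filter]
  congr 1
  ext p
  simp only [mem_filter, arcSet, mem_univ, true_and]
  aesop

lemma arcs_count_eq (D D' : GraphOrientation G) (Q : V × V → Prop) [DecidablePred Q]
    (hQ : ∀ u v, Q (u, v) ↔ Q (v, u)) :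
    ((arcSet D).filter Q).card = ((arcSet D').filter Q).card := by
  apply Finset.card_bij' (fun p _ => if D'.arc p.1 p.2 then p else (p.2, p.1))
      (fun p _ => if D.arc p.1 p.2 then p else (p.2, p.1))
  · intro p hp
    simp only [arcSet, mem_filter, mem_univ, true_and] at hp ⊢
    by_cases h : D'.arc p.1 p.2
    · simpa [h] using hp.2
    · have hadj : G.Adj p.1 p.2 := (D.adj_iff p.1 p.2).mpr (Or.inl hp.1)
      have : D'.arc p.2 p.1 := ((D'.adj_iff p.1 p.2).mp hadj).resolve_left h
      simp only [if_neg h]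
      exact ⟨this, (hQ p.1 p.2).mp hp.2⟩
  · intro p hp
    simp only [arcSet, mem_filter, mem_univ, true_and] at hp ⊢
    by_cases h : D.arc p.1 p.2
    · simpa [h] using hp.2
    · have hadj : G.Adj p.1 p.2 := (D'.adj_iff p.1 p.2).mpr (Or.inl hp.1)
      have : D.arc p.2 p.1 := ((D.adj_iff p.1 p.2).mp hadj).resolve_left h
      simp only [if_neg h]
      exact ⟨this, (hQ p.1 p.2).mp hp.2⟩
  · intro p hp
    simp only [arcSet, mem_filter, mem_univ, true_and] at hp
    by_cases h : D'.arc p.1 p.2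
    · simp [h, hp.1]
    · have hna : ¬ D.arc p.2 p.1 := fun hc => D.asymm p.1 p.2 hp.1 hc
      simp [h, hna]
  · intro p hp
    simp only [arcSet, mem_filter, mem_univ, true_and] at hp
    by_cases h : D.arc p.1 p.2
    · simp [h, hp.1]
    · have hna : ¬ D'.arc p.2 p.1 := fun hc => D'.asymm p.1 p.2 hp.1 hc
      simp [h, hna]

lemma total_indeg_eq (D D' : GraphOrientation G) :
    ∑ v : V, indeg D v = ∑ v : V, indeg D' v := by
  rw [sum_indeg D univ, sum_indeg D' univ]
  have h := arcs_count_eq D D' (fun _ => True) (by simp)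
  simpa using h

lemma hinge_le (D D' : GraphOrientation G) (hD : NoReversiblePath D) (t : ℕ) :
    ∑ v : V, (indeg D v - t) ≤ ∑ v : V, (indeg D' v - t) := by
  set U : Finset V := univ.filter
      (fun u => ∃ v, Relation.ReflTransGen D.arc u v ∧ t < indeg D v) with hU
  have hmemU : ∀ u, u ∈ U ↔ ∃ v, Relation.ReflTransGen D.arc u v ∧ t < indeg D v := by
    intro u; simp [hU]
  have h1 : ∀ u ∈ U, t ≤ indeg D u := by
    intro u hu
    obtain ⟨v, hpath, hv⟩ := (hmemU u).mp hu
    have := hD u v hpath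
    omega
  -- outside U the D-term is zero
  have step1 : ∑ v : V, (indeg D v - t) = ∑ v ∈ U, (indeg D v - t) := by
    symm
    apply Finset.sum_subset (subset_univ U)
    intro v _ hv
    have : ¬ t < indeg D v := fun hc =>
      hv ((hmemU v).mpr ⟨v, Relation.ReflTransGen.refl, hc⟩)
    omega
  have step2 : ∑ v ∈ U, (indeg D v - t) + t * U.card = ∑ v ∈ U, indeg D v := by
    rw [Finset.card_eq_sum_ones U, Finset.mul_sum, ← Finset.sum_add_distrib]
    apply Finset.sum_congr rfl
    intro v hv
    have := h1 v hv
    omega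
  -- U is closed under predecessors
  have hclosed : ∀ p : V × V, D.arc p.1 p.2 → p.2 ∈ U → p.1 ∈ U := by
    rintro ⟨a, b⟩ harc hb
    obtain ⟨v, hpath, hv⟩ := (hmemU b).mp hb
    exact (hmemU a).mpr ⟨v, Relation.ReflTransGen.head harc hpath, hv⟩
  have step3 : ∑ v ∈ U, indeg D v
      = ((arcSet D).filter fun p => p.1 ∈ U ∧ p.2 ∈ U).card := by
    rw [sum_indeg D U]
    congr 1
    apply Finset.filter_congr
    intro p hp
    simp only [arcSet, mem_filter, mem_univ, true_and] at hp
    constructor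
    · intro h2; exact ⟨hclosed p hp h2, h2⟩
    · rintro ⟨_, h2⟩; exact h2
  have step4 : ((arcSet D).filter fun p => p.1 ∈ U ∧ p.2 ∈ U).card
      = ((arcSet D').filter fun p => p.1 ∈ U ∧ p.2 ∈ U).card :=
    arcs_count_eq D D' _ (fun u v => and_comm)
  have step5 : ((arcSet D').filter fun p => p.1 ∈ U ∧ p.2 ∈ U).card
      ≤ ∑ v ∈ U, indeg D' v := by
    rw [sum_indeg D' U]
    apply Finset.card_le_card
    intro p hp
    simp only [mem_filter] at hp ⊢
    exact ⟨hp.1, hp.2.2⟩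
  have step6 : ∑ v ∈ U, indeg D' v ≤ ∑ v ∈ U, (indeg D' v - t) + t * U.card := by
    rw [Finset.card_eq_sum_ones U, Finset.mul_sum, ← Finset.sum_add_distrib]
    apply Finset.sum_le_sum
    intro v _
    omega
  have step7 : ∑ v ∈ U, (indeg D' v - t) ≤ ∑ v : V, (indeg D' v - t) :=
    Finset.sum_le_sum_of_subset (subset_univ U)
  omega

end Aux

section Convex
open Finset

noncomputable def dd (f : ℕ → ℝ) (s : ℕ) : ℝ := (f (s+1) - f s) - (f s - f (s-1))

lemma expand (f : ℕ → ℝ) : ∀ n : ℕ,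
    f n = f 0 + n * (f 1 - f 0) + ∑ s ∈ Finset.Ico 1 n, dd f s * ((n:ℝ) - s) := by
  intro n
  induction n with
  | zero => simp
  | succ n ih =>
    have htel : ∑ s ∈ Finset.Ico 1 (n+1), dd f s = (f (n+1) - f n) - (f 1 - f 0) := by
      rw [Finset.sum_Ico_eq_sum_range]
      simp only [Nat.add_sub_cancel]
      have h : ∀ i, dd f (1 + i) = (f (i+1+1) - f (i+1)) - (f (i+1) - f i) := by
        intro i
        have : 1 + i - 1 = i := by omega
        simp [dd, Nat.add_comm 1 i, this]
      rw [Finset.sum_congr rfl (fun i _ => h i)]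
      exact Finset.sum_range_sub (fun i => f (i+1) - f i) n
    have hsplit : ∑ s ∈ Finset.Ico 1 (n+1), dd f s * (((n:ℝ)+1) - s)
        = ∑ s ∈ Finset.Ico 1 (n+1), dd f s * ((n:ℝ) - s)
          + ∑ s ∈ Finset.Ico 1 (n+1), dd f s := by
      rw [← Finset.sum_add_distrib]
      apply Finset.sum_congr rfl
      intro s _
      ring
    have htop : ∑ s ∈ Finset.Ico 1 (n+1), dd f s * ((n:ℝ) - s)
        = ∑ s ∈ Finset.Ico 1 n, dd f s * ((n:ℝ) - s) := by
      rcases Nat.eq_zero_or_pos n with h0 | h0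
      · subst h0; simp
      · rw [Finset.sum_Ico_succ_top h0]
        simp
    push_cast
    rw [hsplit, htop, htel]
    push_cast at ih
    linarith [ih]

lemma expand' (f : ℕ → ℝ) {n N : ℕ} (h : n ≤ N) :
    f n = f 0 + n * (f 1 - f 0) + ∑ s ∈ Finset.Ico 1 N, dd f s * (((n - s : ℕ)):ℝ) := by
  rw [expand f n]
  congr 1
  rcases Nat.eq_zero_or_pos n with h0 | h0
  · subst h0
    simp
  · rw [← Finset.sum_Ico_consecutive _ h0 h]
    have h1 : ∑ s ∈ Finset.Ico n N, dd f s * (((n - s : ℕ)):ℝ) = 0 := by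
      apply Finset.sum_eq_zero
      intro s hs
      have : n - s = 0 := by have := (Finset.mem_Ico.mp hs).1; omega
      simp [this]
    rw [h1, add_zero]
    apply Finset.sum_congr rfl
    intro s hs
    have hsn : s ≤ n := le_of_lt (Finset.mem_Ico.mp hs).2
    rw [Nat.cast_sub hsn]

lemma convexSumLe {V : Type*} [Fintype V] (f : ℕ → ℝ)
    (hconvex : ∀ i j : ℕ, i < j → f (i + 1) - f i < f (j + 1) - f j)
    (g g' : V → ℕ) (hsum : ∑ v, g v = ∑ v, g' v)
    (hhinge : ∀ t : ℕ, ∑ v, (g v - t) ≤ ∑ v, (g' v - t)) :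
    ∑ v, f (g v) ≤ ∑ v, f (g' v) := by
  classical
  set N := Finset.univ.sup (fun v : V => max (g v) (g' v)) with hN
  have hg : ∀ v, g v ≤ N := fun v =>
    le_trans (le_max_left _ _) (Finset.le_sup (f := fun v : V => max (g v) (g' v)) (Finset.mem_univ v))
  have hg' : ∀ v, g' v ≤ N := fun v =>
    le_trans (le_max_right _ _) (Finset.le_sup (f := fun v : V => max (g v) (g' v)) (Finset.mem_univ v))
  have e : ∀ (h : V → ℕ), (∀ v, h v ≤ N) →
      ∑ v, f (h v) = (Fintype.card V : ℝ) * f 0 + (f 1 - f 0) * ((∑ v, h v : ℕ):ℝ)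
        + ∑ s ∈ Finset.Ico 1 N, dd f s * ((∑ v, (h v - s) : ℕ):ℝ) := by
    intro h hb
    rw [Finset.sum_congr rfl (fun v _ => expand' f (hb v)),
        Finset.sum_add_distrib, Finset.sum_add_distrib, Finset.sum_const,
        Finset.sum_comm, nsmul_eq_mul, Finset.card_univ]
    congr 1
    · congr 1
      rw [← Finset.sum_mul, mul_comm, Nat.cast_sum]
    · apply Finset.sum_congr rfl
      intro s _
      rw [← Finset.mul_sum, Nat.cast_sum]
  rw [e g hg, e g' hg']
  have hsum' : ((∑ v, g v : ℕ):ℝ) = ((∑ v, g' v : ℕ):ℝ) := by exact_mod_cast hsum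
  rw [hsum']
  apply add_le_add_right
  apply Finset.sum_le_sum
  intro s hs
  have hs1 : 1 ≤ s := (Finset.mem_Ico.mp hs).1
  have hd : 0 ≤ dd f s := by
    have hlt : s - 1 < s := by omega
    have hc := hconvex (s-1) s hlt
    have h2 : s - 1 + 1 = s := by omega
    rw [h2] at hc
    simp only [dd]
    linarith
  apply mul_le_mul_of_nonneg_left _ hd
  exact_mod_cast hhinge s

end Convex

/-- For an increasing, strictly convex `f : ℕ → ℝ`, an orientation with no reversible
path minimizes `∑ v, f (δ v)` among all orientations. -/
theorem stmt_4 {V : Type*} [Fintype V] (G : SimpleGraph V)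
    (f : ℕ → ℝ) (hmono : StrictMono f)
    (hconvex : ∀ i j : ℕ, i < j → f (i + 1) - f i < f (j + 1) - f j)
    (D : GraphOrientation G) (hD : NoReversiblePath D) :
    ∀ D' : GraphOrientation G, ∑ v : V, f (indeg D v) ≤ ∑ v : V, f (indeg D' v) := by
  intro D'
  exact convexSumLe f hconvex (indeg D) (indeg D') (total_indeg_eq D D') (hinge_le D D' hD)
end

section
/- Let G be a finite undirected graph, let f : ℕ → ℝ be increasing and strictly convex (i.e., f(i+1) − f(i) is strictly increasing in i), let D be an orientation of G, and let P be a reversible directed path in D from u to v. Let D' be the orientation obtained from D by reversing P. Then Σ_w f(δ_{D'}(w)) < Σ_w f(δ_D(w)). -/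
lemma getElem_idx_congr {V : Type*} (p : List V) {i j : ℕ} (h : i = j) (hi : i < p.length) :
    p[i] = p[j]'(h ▸ hi) := by subst h; rfl

lemma mem_pathArcs_iff {V : Type*} {p : List V} {a b : V} :
    (a, b) ∈ pathArcs p ↔ ∃ i, ∃ _ : i + 1 < p.length, p[i] = a ∧ p[i+1] = b := by
  simp only [pathArcs, List.mem_iff_getElem, List.getElem_zip, List.length_zip,
    List.length_tail, List.getElem_tail, Prod.mk.injEq, lt_min_iff]
  constructor
  · rintro ⟨i, ⟨h1, h2⟩, ha, hb⟩
    exact ⟨i, by omega, ha, hb⟩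
  · rintro ⟨i, hi, ha, hb⟩
    exact ⟨i, ⟨by omega, by omega⟩, ha, hb⟩

/-- Reversing a reversible path strictly decreases `∑ v, f (δ v)` for any increasing,
strictly convex `f : ℕ → ℝ`. -/
theorem stmt_5 {V : Type*} [Fintype V] (G : SimpleGraph V)
    (f : ℕ → ℝ) (hmono : StrictMono f)
    (hconvex : ∀ i j : ℕ, i < j → f (i + 1) - f i < f (j + 1) - f j)
    (D D' : GraphOrientation G) (p : List V) (u v : V)
    (hp : IsDipath D.arc p u v) (hrev : indeg D u + 1 < indeg D v)
    (hD' : ReversalAlong D D' (pathArcs p)) :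
    ∑ w : V, f (indeg D' w) < ∑ w : V, f (indeg D w) := by
  classical
  obtain ⟨hhead, hlast, hnodup, hchain⟩ := hp
  obtain ⟨hA1, hA2⟩ := hD'
  have hne : p ≠ [] := by rintro rfl; simp at hhead
  have hn0 : 0 < p.length := List.length_pos_iff.mpr hne
  have hu : p[0] = u := by
    rw [List.head?_eq_head hne, List.head_eq_getElem] at hhead
    exact Option.some_injective _ hhead
  have hv : p[p.length - 1] = v := by
    rw [List.getLast?_eq_getLast hne, List.getLast_eq_getElem] at hlast
    exact Option.some_injective _ hlast
  have hn2 : 2 ≤ p.length := by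
    by_contra h
    have h1 : p.length = 1 := by omega
    have huv : u = v := by rw [← hu, ← hv]; congr 1; omega
    rw [huv] at hrev; omega
  have harc : ∀ i (h : i + 1 < p.length), D.arc p[i] p[i+1] := by
    intro i h
    have := List.isChain_iff_getElem.mp hchain i (by omega)
    simpa using this
  have hinj : ∀ {i j : ℕ} (hi : i < p.length) (hj : j < p.length),
      p[i] = p[j] → i = j := by
    intro i j hi hj h
    exact (List.Nodup.getElem_inj_iff hnodup).mp h
  have huv : u ≠ v := by
    rw [← hu, ← hv]
    intro h
    have := hinj (by omega) (by omega) h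
    omega
  -- indegree of u increases by 1
  have hSu : {x | D'.arc x u} = insert (p[1]'(by omega)) {x | D.arc x u} := by
    ext x
    simp only [Set.mem_setOf_eq, hA2, Set.mem_insert_iff, mem_pathArcs_iff]
    constructor
    · rintro (⟨hx, -⟩ | ⟨i, hi, hpi, hpx⟩)
      · exact Or.inr hx
      · have : i = 0 := by
          rw [← hu] at hpi; exact hinj (by omega) (by omega) hpi
        subst this
        exact Or.inl hpx.symm
    · rintro (rfl | hx)
      · exact Or.inr ⟨0, by omega, hu, rfl⟩
      · refine Or.inl ⟨hx, ?_⟩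
        rintro ⟨i, hi, -, hpi⟩
        rw [← hu] at hpi
        have := hinj (by omega) (by omega) hpi
        omega
  have hdu : indeg D' u = indeg D u + 1 := by
    rw [indeg, hSu, Set.ncard_insert_of_notMem, indeg]
    intro hx
    exact D.asymm _ _ (by rw [← hu]; exact harc 0 (by omega)) hx
  -- indegree of v decreases by 1
  have hSv : {x | D'.arc x v} = {x | D.arc x v} \ {p[p.length - 2]'(by omega)} := by
    ext x
    simp only [Set.mem_setOf_eq, hA2, Set.mem_diff, Set.mem_singleton_iff, mem_pathArcs_iff]
    constructor
    · rintro (⟨hx, hnx⟩ | ⟨i, hi, hpi, hpx⟩)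
      · refine ⟨hx, fun h => hnx ⟨p.length - 2, by omega, h.symm, by rw [← hv]; congr 1; omega⟩⟩
      · rw [← hv] at hpi
        have := hinj (by omega) (by omega) hpi
        omega
    · rintro ⟨hx, hne2⟩
      refine Or.inl ⟨hx, ?_⟩
      rintro ⟨i, hi, hpi, hpv⟩
      rw [← hv] at hpv
      have : i + 1 = p.length - 1 := hinj (by omega) (by omega) hpv
      apply hne2
      rw [← hpi]; congr 1; omega
  have hdvmem : (p[p.length - 2]'(by omega)) ∈ {x | D.arc x v} := by
    have h1 := harc (p.length - 2) (by omega)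
    rw [getElem_idx_congr p (show p.length - 2 + 1 = p.length - 1 by omega), hv] at h1
    exact h1
  have hdv : indeg D' v + 1 = indeg D v := by
    rw [indeg, hSv, indeg]
    exact Set.ncard_diff_singleton_add_one hdvmem
  -- other vertices unchanged
  have hdo : ∀ w, w ≠ u → w ≠ v → indeg D' w = indeg D w := by
    intro w hwu hwv
    by_cases hwp : w ∈ p
    · obtain ⟨i, hi, rfl⟩ := List.mem_iff_getElem.mp hwp
      have hi0 : 0 < i := by
        rcases Nat.eq_zero_or_pos i with h | h
        · subst h; exact absurd hu hwu
        · exact h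
      have hi1 : i + 1 < p.length := by
        rcases Nat.lt_or_ge (i+1) p.length with h | h
        · exact h
        · exfalso; apply hwv; rw [← hv]; congr 1; omega
      have hS : {x | D'.arc x p[i]} =
          insert (p[i+1]) ({x | D.arc x p[i]} \ {p[i-1]'(by omega)}) := by
        ext x
        simp only [Set.mem_setOf_eq, hA2, Set.mem_insert_iff, Set.mem_diff,
          Set.mem_singleton_iff, mem_pathArcs_iff]
        constructor
        · rintro (⟨hx, hnx⟩ | ⟨j, hj, hpj, hpx⟩)
          · refine Or.inr ⟨hx, fun h => hnx ⟨i - 1, by omega, h.symm, by congr 1; omega⟩⟩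
          · have : j = i := hinj (by omega) hi hpj
            subst this
            exact Or.inl hpx.symm
        · rintro (rfl | ⟨hx, hne1⟩)
          · exact Or.inr ⟨i, hi1, rfl, rfl⟩
          · refine Or.inl ⟨hx, ?_⟩
            rintro ⟨j, hj, hpj, hpi⟩
            have : j + 1 = i := hinj (by omega) hi hpi
            apply hne1
            rw [← hpj]; congr 1; omega
      have hmem : (p[i-1]'(by omega)) ∈ {x | D.arc x p[i]} := by
        have h1 := harc (i-1) (by omega)
        rw [getElem_idx_congr p (show i - 1 + 1 = i by omega)] at h1
        exact h1
      have hnmem : (p[i+1]) ∉ {x | D.arc x p[i]} \ {p[i-1]'(by omega)} := by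
        rintro ⟨hx, -⟩
        exact D.asymm _ _ (harc i hi1) hx
      rw [indeg, indeg, hS, Set.ncard_insert_of_notMem hnmem]
      exact Set.ncard_diff_singleton_add_one hmem (Set.toFinite _)
    · have hSw : {x | D'.arc x w} = {x | D.arc x w} := by
        ext x
        simp only [Set.mem_setOf_eq, hA2, mem_pathArcs_iff]
        constructor
        · rintro (⟨hx, -⟩ | ⟨j, hj, hpj, hpx⟩)
          · exact hx
          · exact absurd (hpj ▸ List.getElem_mem _) hwp
        · intro hx
          refine Or.inl ⟨hx, ?_⟩
          rintro ⟨j, hj, -, hpj⟩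
          exact hwp (hpj ▸ List.getElem_mem _)
      rw [indeg, hSw, indeg]
  -- sum comparison
  have hsum : ∑ w : V, f (indeg D' w) - ∑ w : V, f (indeg D w)
      = (f (indeg D' u) - f (indeg D u)) + (f (indeg D' v) - f (indeg D v)) := by
    rw [← Finset.sum_sub_distrib]
    rw [← Finset.sum_pair huv (f := fun w => f (indeg D' w) - f (indeg D w))]
    refine (Finset.sum_subset (Finset.subset_univ _) ?_).symm
    intro w _ hw
    simp only [Finset.mem_insert, Finset.mem_singleton, not_or] at hw
    rw [hdo w hw.1 hw.2, sub_self]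
  have hkey : f (indeg D u + 1) - f (indeg D u) < f (indeg D' v + 1) - f (indeg D' v) :=
    hconvex _ _ (by omega)
  rw [hdv] at hkey
  rw [← sub_neg]
  rw [hsum, hdu]
  linarith
end

section
/- Let D be a finite strongly connected digraph on n ≥ 2 vertices. Then there exist a cyclic ordering of the vertices (a bijection ν : V → Fin n) and an assignment to each arc a of a set S(a) ⊆ V which is either empty or a cyclic interval with respect to ν, such that: (i) for every vertex v, the sets S(a) over arcs a leaving v are pairwise disjoint and their union is V ∖ {v}; and (ii) for every pair of distinct vertices x and d, the walk that starts at x and from each current vertex w ≠ d follows the unique arc a leaving w with d ∈ S(a) reaches d after finitely many steps. In other words, every strongly connected digraph admits a feasible interval routing scheme in which each arc is labelled with at most one interval. -/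
set_option linter.unusedSectionVars false
set_option maxHeartbeats 1000000
open scoped Classical

open scoped Classical

section IRSproof
variable {V : Type*}

variable {V : Type*}

/-- Reachability avoiding a forbidden set `W` (the start is not checked). -/
def ReachAv (A : V → V → Prop) (W : Finset V) (u x : V) : Prop :=
  Relation.ReflTransGen (fun a b => A a b ∧ b ∉ W) u x

lemma reachAv_mono {A : V → V → Prop} {W W' : Finset V} (h : W ⊆ W') {u x : V}
    (hr : ReachAv A W' u x) : ReachAv A W u x :=
  Relation.ReflTransGen.mono (p := fun a b => A a b ∧ b ∉ W) (fun _ _ hab => ⟨hab.1, fun hm => hab.2 (h hm)⟩) _ _ hr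

lemma reachAv_not_mem {A : V → V → Prop} {W : Finset V} {u x : V}
    (hu : u ∉ W) (h : ReachAv A W u x) : x ∉ W := by
  induction h with
  | refl => exact hu
  | tail _ hst _ => exact hst.2

lemma reachAv_cases {A : V → V → Prop} {W : Finset V} {v x : V} (h : ReachAv A W v x) :
    x = v ∨ ∃ u, A v u ∧ u ∉ W ∧ u ≠ v ∧ ReachAv A (insert v W) u x := by
  induction h with
  | refl => exact Or.inl rfl
  | @tail y z hvy hyz ih =>
    rcases ih with rfl | ⟨u, hvu, huW, huv, hux⟩
    · by_cases hzv : z = y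
      · exact Or.inl hzv
      · exact Or.inr ⟨z, hyz.1, hyz.2, hzv, Relation.ReflTransGen.refl⟩
    · by_cases hzv : z = v
      · exact Or.inl hzv
      · refine Or.inr ⟨u, hvu, huW, huv, Relation.ReflTransGen.tail hux ⟨hyz.1, ?_⟩⟩
        simp only [Finset.mem_insert, not_or]
        exact ⟨hzv, hyz.2⟩

lemma reachAv_split {A : V → V → Prop} {W T : Finset V}
    (hT : ∀ y ∈ T, ∀ z, A y z → z ∉ W → z ∈ T) {w x : V} (h : ReachAv A W w x) :
    x ∈ T ∨ (w ∉ T ∧ ReachAv A (W ∪ T) w x) := by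
  induction h with
  | refl =>
    by_cases hw : w ∈ T
    · exact Or.inl hw
    · exact Or.inr ⟨hw, Relation.ReflTransGen.refl⟩
  | @tail y z hwy hyz ih =>
    rcases ih with hyT | ⟨hwT, hr⟩
    · exact Or.inl (hT y hyT z hyz.1 hyz.2)
    · by_cases hzT : z ∈ T
      · exact Or.inl hzT
      · refine Or.inr ⟨hwT, Relation.ReflTransGen.tail hr ⟨hyz.1, ?_⟩⟩
        simp only [Finset.mem_union, not_or]
        exact ⟨hyz.2, hzT⟩

/-- `stepsTo A r k v`: `v` reaches `r` in at most `k` steps. -/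
def stepsTo (A : V → V → Prop) (r : V) : ℕ → V → Prop
  | 0, v => v = r
  | (k+1), v => v = r ∨ ∃ u, A v u ∧ stepsTo A r k u

lemma exists_stepsTo {A : V → V → Prop} {r v : V} (h : Relation.ReflTransGen A v r) :
    ∃ k, stepsTo A r k v := by
  induction h using Relation.ReflTransGen.head_induction_on with
  | refl => exact ⟨0, rfl⟩
  | head hab _ ih =>
    obtain ⟨k, hk⟩ := ih
    exact ⟨k + 1, Or.inr ⟨_, hab, hk⟩⟩

lemma exists_qm (A : V → V → Prop) (r : V) (hsc : ∀ v, Relation.ReflTransGen A v r) :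
    ∃ (m : V → ℕ) (q : V → V), ∀ v, v ≠ r → A v (q v) ∧ m (q v) < m v := by
  have hex : ∀ v, ∃ k, stepsTo A r k v := fun v => exists_stepsTo (hsc v)
  set m : V → ℕ := fun v => Nat.find (hex v) with hm
  have hstep : ∀ v, v ≠ r → ∃ u, A v u ∧ m u < m v := by
    intro v hv
    have h1 : stepsTo A r (m v) v := Nat.find_spec (hex v)
    rcases Nat.eq_zero_or_pos (m v) with h0 | h0
    · rw [h0] at h1; exact absurd h1 hv
    · obtain ⟨k, hk⟩ : ∃ k, m v = k + 1 := ⟨m v - 1, by omega⟩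
      rw [hk] at h1
      rcases h1 with rfl | ⟨u, hvu, hu⟩
      · exact absurd rfl hv
      · refine ⟨u, hvu, ?_⟩
        have : m u ≤ k := Nat.find_le hu
        omega
  refine ⟨m, fun v => if h : v = r then r else Classical.choose (hstep v h), fun v hv => ?_⟩
  simp only [dif_neg hv]
  exact Classical.choose_spec (hstep v hv)

end IRSproof

set_option linter.unusedSectionVars false
set_option maxHeartbeats 1000000
open scoped Classical

section IRS3
variable {V : Type*} [Fintype V] [Inhabited V]


noncomputable def nbrList (A : V → V → Prop) (u : V) : List V :=
  (Finset.univ.filter (fun w => A u w)).toList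

lemma mem_nbrList {A : V → V → Prop} {u b : V} : b ∈ nbrList A u ↔ A u b := by
  simp [nbrList]

noncomputable def nbrsOrd (A : V → V → Prop) (r : V) (q : V → V) (u : V) : List V :=
  if u = r then nbrList A u else ((nbrList A u).erase (q u)) ++ [q u]

lemma mem_nbrsOrd_of_arc {A : V → V → Prop} {r : V} {q : V → V} {u b : V}
    (h : A u b) : b ∈ nbrsOrd A r q u := by
  unfold nbrsOrd
  split
  · exact mem_nbrList.2 h
  · by_cases hb : b = q u
    · subst hb; exact List.mem_append_right _ (List.mem_singleton_self _)
    · exact List.mem_append_left _ ((List.mem_erase_of_ne hb).2 (mem_nbrList.2 h))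

lemma arc_of_mem_nbrsOrd {A : V → V → Prop} {r : V} {q : V → V} {u b : V}
    (hq : u ≠ r → A u (q u)) (h : b ∈ nbrsOrd A r q u) : A u b := by
  unfold nbrsOrd at h
  split at h
  · exact mem_nbrList.1 h
  · rcases List.mem_append.1 h with h | h
    · exact mem_nbrList.1 (List.mem_of_mem_erase h)
    · rw [List.mem_singleton.1 h]
      exact hq (by assumption)

lemma headI_mem' {α : Type*} [Inhabited α] {l : List α} (h : l ≠ []) : l.headI ∈ l := by
  cases l with
  | nil => exact absurd rfl h
  | cons a l => exact List.mem_cons_self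

structure DFSOut (A : V → V → Prop) (r : V) (q : V → V) (W : Finset V) (Lnb : List V) where
  ts : List (List V)
  blk : V → List V
  ch : V → List V
  nodup : ts.flatten.Nodup
  notW : ∀ x ∈ ts.flatten, x ∉ W
  mem_iff : ∀ x, x ∈ ts.flatten ↔ ∃ u ∈ Lnb, u ∉ W ∧ ReachAv A W u x
  roots_sub : (ts.map (·.headI)).Sublist Lnb
  tree_ne : ∀ t ∈ ts, t ≠ []
  blk_root : ∀ t ∈ ts, blk t.headI = t
  blk_eq : ∀ a ∈ ts.flatten, blk a = a :: ((ch a).map blk).flatten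
  blk_infix : ∀ a ∈ ts.flatten, blk a <:+: ts.flatten
  ch_arc : ∀ a ∈ ts.flatten, ∀ b ∈ ch a, A a b
  ch_mem : ∀ a ∈ ts.flatten, ∀ b ∈ ch a, b ∈ ts.flatten
  qlast : ∀ a ∈ ts.flatten, a ≠ r → q a ∈ ch a →
    ∃ P, blk a = P ++ blk (q a) ∧ P.headI = a ∧ P ≠ []


noncomputable def DFSOut.empty (A : V → V → Prop) (r : V) (q : V → V) (W : Finset V) (Lnb : List V)
    (h : ∀ u ∈ Lnb, u ∈ W) : DFSOut A r q W Lnb where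
  ts := []
  blk := fun _ => []
  ch := fun _ => []
  nodup := by simp
  notW := by simp
  mem_iff := by
    intro x
    simp only [List.flatten_nil, List.not_mem_nil, false_iff, not_exists]
    rintro u ⟨hu, huW, -⟩
    exact huW (h u hu)
  roots_sub := by simp
  tree_ne := by simp
  blk_root := by simp
  blk_eq := by simp
  blk_infix := by simp
  ch_arc := by simp
  ch_mem := by simp
  qlast := by simp

noncomputable def DFSOut.skip {A : V → V → Prop} {r : V} {q : V → V} {W : Finset V} {u : V}
    {rest : List V} (hu : u ∈ W) (O : DFSOut A r q W rest) : DFSOut A r q W (u :: rest) where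
  ts := O.ts
  blk := O.blk
  ch := O.ch
  nodup := O.nodup
  notW := O.notW
  mem_iff := by
    intro x
    rw [O.mem_iff]
    constructor
    · rintro ⟨w, hw, hwW, hr⟩; exact ⟨w, List.mem_cons_of_mem _ hw, hwW, hr⟩
    · rintro ⟨w, hw, hwW, hr⟩
      rcases List.mem_cons.1 hw with rfl | hw
      · exact absurd hu hwW
      · exact ⟨w, hw, hwW, hr⟩
  roots_sub := O.roots_sub.trans (List.sublist_cons_self _ _)
  tree_ne := O.tree_ne
  blk_root := O.blk_root
  blk_eq := O.blk_eq
  blk_infix := O.blk_infix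
  ch_arc := O.ch_arc
  ch_mem := O.ch_mem
  qlast := O.qlast


lemma dfs_exists (A : V → V → Prop) (r : V) (q : V → V) (hq : ∀ u, u ≠ r → A u (q u)) :
    ∀ (k : ℕ) (Lnb : List V) (W : Finset V), (Finset.univ \ W).card ≤ k →
      Nonempty (DFSOut A r q W Lnb) := by
  intro k
  induction k with
  | zero =>
    intro Lnb W hcard
    refine ⟨DFSOut.empty _ _ _ _ _ ?_⟩
    intro u _
    by_contra h
    have h1 : u ∈ Finset.univ \ W := by simp [h]
    have := Finset.card_pos.2 ⟨u, h1⟩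
    omega
  | succ k IH =>
    intro Lnb
    induction Lnb with
    | nil => intro W _; exact ⟨DFSOut.empty _ _ _ _ _ (by simp)⟩
    | cons u rest ihr =>
      intro W hcard
      by_cases hu : u ∈ W
      · obtain ⟨O⟩ := ihr W hcard
        exact ⟨O.skip hu⟩
      -- main construction
      have hcard1 : (Finset.univ \ insert u W).card ≤ k := by
        have h1 : Finset.univ \ insert u W ⊆ (Finset.univ \ W).erase u := by
          intro x hx
          simp only [Finset.mem_sdiff, Finset.mem_insert, Finset.mem_univ, true_and, not_or,
            Finset.mem_erase] at hx ⊢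
          tauto
        have h2 := Finset.card_le_card h1
        have h3 : u ∈ Finset.univ \ W := by simp [hu]
        rw [Finset.card_erase_of_mem h3] at h2
        omega
      obtain ⟨O₁⟩ := IH (nbrsOrd A r q u) (insert u W) hcard1
      set t := u :: O₁.ts.flatten with ht
      have hu1 : u ∉ O₁.ts.flatten := fun h => (O₁.notW u h) (Finset.mem_insert_self u W)
      have hmemt : ∀ x, x ∈ t ↔ ReachAv A W u x := by
        intro x
        constructor
        · intro hx
          rcases List.mem_cons.1 hx with rfl | hx
          · exact Relation.ReflTransGen.refl
          · obtain ⟨b, hb, hbW, hr⟩ := (O₁.mem_iff x).1 hx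
            have hAub : A u b := arc_of_mem_nbrsOrd (hq u) hb
            have hbW' : b ∉ W := fun h => hbW (Finset.mem_insert_of_mem h)
            exact Relation.ReflTransGen.head ⟨hAub, hbW'⟩
              (reachAv_mono (Finset.subset_insert u W) hr)
        · intro hx
          rcases reachAv_cases hx with rfl | ⟨z, hAuz, hzW, hzu, hr⟩
          · exact List.mem_cons_self
          · refine List.mem_cons_of_mem _ ?_
            refine (O₁.mem_iff x).2 ⟨z, mem_nbrsOrd_of_arc hAuz, ?_, hr⟩
            simp only [Finset.mem_insert, not_or]
            exact ⟨hzu, hzW⟩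
      have hWt : ∀ x ∈ t, x ∉ W := by
        intro x hx
        rcases List.mem_cons.1 hx with rfl | hx
        · exact hu
        · exact fun h => O₁.notW x hx (Finset.mem_insert_of_mem h)
      set W₂ := W ∪ t.toFinset with hW₂
      have hcard2 : (Finset.univ \ W₂).card ≤ k + 1 := by
        refine le_trans (Finset.card_le_card
          (Finset.sdiff_subset_sdiff (subset_refl _) Finset.subset_union_left)) hcard
      obtain ⟨O₂⟩ := ihr W₂ hcard2
      have hdisj : ∀ x ∈ O₂.ts.flatten, x ∉ t := by
        intro x hx hxt
        exact O₂.notW x hx (Finset.mem_union_right _ (List.mem_toFinset.2 hxt))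
      have hT : ∀ y ∈ t.toFinset, ∀ z, A y z → z ∉ W → z ∈ t.toFinset := by
        intro y hy z hAz hzW
        rw [List.mem_toFinset] at hy ⊢
        exact (hmemt z).2 (Relation.ReflTransGen.tail ((hmemt y).1 hy) ⟨hAz, hzW⟩)
      set blkN : V → List V :=
        fun x => if x = u then t else if x ∈ O₁.ts.flatten then O₁.blk x else O₂.blk x
        with hblkN
      set chN : V → List V :=
        fun x => if x = u then O₁.ts.map (·.headI) else
          if x ∈ O₁.ts.flatten then O₁.ch x else O₂.ch x with hchN
      have hblku : blkN u = t := by simp [hblkN]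
      have hchu : chN u = O₁.ts.map (·.headI) := by simp [hchN]
      have hblk1 : ∀ x ∈ O₁.ts.flatten, blkN x = O₁.blk x := by
        intro x hx
        have hxu : x ≠ u := fun h => hu1 (h ▸ hx)
        show (if x = u then t else if x ∈ O₁.ts.flatten then O₁.blk x else O₂.blk x) = _
        rw [if_neg hxu, if_pos hx]
      have hch1 : ∀ x ∈ O₁.ts.flatten, chN x = O₁.ch x := by
        intro x hx
        have hxu : x ≠ u := fun h => hu1 (h ▸ hx)
        show (if x = u then O₁.ts.map (·.headI) else
          if x ∈ O₁.ts.flatten then O₁.ch x else O₂.ch x) = _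
        rw [if_neg hxu, if_pos hx]
      have hblk2 : ∀ x ∈ O₂.ts.flatten, blkN x = O₂.blk x := by
        intro x hx
        have hxt := hdisj x hx
        have hxu : x ≠ u := fun h => hxt (h ▸ List.mem_cons_self)
        have hx1 : x ∉ O₁.ts.flatten := fun h => hxt (List.mem_cons_of_mem _ h)
        show (if x = u then t else if x ∈ O₁.ts.flatten then O₁.blk x else O₂.blk x) = _
        rw [if_neg hxu, if_neg hx1]
      have hch2 : ∀ x ∈ O₂.ts.flatten, chN x = O₂.ch x := by
        intro x hx
        have hxt := hdisj x hx
        have hxu : x ≠ u := fun h => hxt (h ▸ List.mem_cons_self)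
        have hx1 : x ∉ O₁.ts.flatten := fun h => hxt (List.mem_cons_of_mem _ h)
        show (if x = u then O₁.ts.map (·.headI) else
          if x ∈ O₁.ts.flatten then O₁.ch x else O₂.ch x) = _
        rw [if_neg hxu, if_neg hx1]
      have hflat : (t :: O₂.ts).flatten = t ++ O₂.ts.flatten := rfl
      refine ⟨⟨t :: O₂.ts, blkN, chN, ?_, ?_, ?_, ?_, ?_, ?_, ?_, ?_, ?_, ?_, ?_⟩⟩
      · -- nodup
        rw [hflat]
        refine List.Nodup.append (List.nodup_cons.2 ⟨hu1, O₁.nodup⟩) O₂.nodup ?_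
        intro x hxt hx2
        exact hdisj x hx2 hxt
      · -- notW
        intro x hx
        rw [hflat, List.mem_append] at hx
        rcases hx with hx | hx
        · exact hWt x hx
        · exact fun h => O₂.notW x hx (Finset.mem_union_left _ h)
      · -- mem_iff
        intro x
        rw [hflat, List.mem_append]
        constructor
        · rintro (hx | hx)
          · exact ⟨u, List.mem_cons_self, hu, (hmemt x).1 hx⟩
          · obtain ⟨w, hw, hwW, hr⟩ := (O₂.mem_iff x).1 hx
            exact ⟨w, List.mem_cons_of_mem _ hw, fun h => hwW (Finset.mem_union_left _ h),
              reachAv_mono Finset.subset_union_left hr⟩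
        · rintro ⟨w, hw, hwW, hr⟩
          rcases List.mem_cons.1 hw with rfl | hw
          · exact Or.inl ((hmemt x).2 hr)
          · rcases reachAv_split hT hr with hxT | ⟨hwT, hr2⟩
            · exact Or.inl (List.mem_toFinset.1 hxT)
            · refine Or.inr ((O₂.mem_iff x).2 ⟨w, hw, ?_, hr2⟩)
              rw [hW₂, Finset.mem_union]
              exact fun h => h.elim hwW hwT
      · -- roots_sub
        show ((t :: O₂.ts).map (·.headI)).Sublist (u :: rest)
        rw [List.map_cons, ht]
        exact List.Sublist.cons₂ _ O₂.roots_sub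
      · -- tree_ne
        intro t' ht'
        rcases List.mem_cons.1 ht' with rfl | ht'
        · exact List.cons_ne_nil _ _
        · exact O₂.tree_ne t' ht'
      · -- blk_root
        intro t' ht'
        rcases List.mem_cons.1 ht' with rfl | ht'
        · rw [ht]; exact hblku
        · have hne := O₂.tree_ne t' ht'
          have hmem : t'.headI ∈ O₂.ts.flatten := List.mem_flatten.2 ⟨t', ht', headI_mem' hne⟩
          rw [hblk2 _ hmem]
          exact O₂.blk_root t' ht'
      · -- blk_eq
        intro a ha
        rw [hflat, List.mem_append] at ha
        rcases ha with hat | ha₂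
        · rcases List.mem_cons.1 hat with rfl | ha₁
          · rw [hblku, hchu]
            have hmm : (O₁.ts.map (·.headI)).map blkN = O₁.ts := by
              rw [List.map_map]
              have h2 : ∀ t' ∈ O₁.ts, (blkN ∘ (·.headI)) t' = id t' := by
                intro t' ht'
                have hne := O₁.tree_ne t' ht'
                have hmem : t'.headI ∈ O₁.ts.flatten :=
                  List.mem_flatten.2 ⟨t', ht', headI_mem' hne⟩
                simp only [Function.comp, id]
                rw [hblk1 _ hmem]
                exact O₁.blk_root t' ht'
              rw [List.map_congr_left h2, List.map_id]
            rw [hmm, ht]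
          · rw [hblk1 a ha₁, hch1 a ha₁, O₁.blk_eq a ha₁]
            congr 1
            congr 1
            exact (List.map_congr_left fun b hb => hblk1 b (O₁.ch_mem a ha₁ b hb)).symm
        · rw [hblk2 a ha₂, hch2 a ha₂, O₂.blk_eq a ha₂]
          congr 1
          congr 1
          exact (List.map_congr_left fun b hb => hblk2 b (O₂.ch_mem a ha₂ b hb)).symm
      · -- blk_infix
        intro a ha
        rw [hflat, List.mem_append] at ha
        have h1 : O₁.ts.flatten <:+: (t :: O₂.ts).flatten :=
          ⟨[u], O₂.ts.flatten, by rw [hflat, ht]; simp⟩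
        have h2 : O₂.ts.flatten <:+: (t :: O₂.ts).flatten :=
          (List.suffix_append t _).isInfix
        rcases ha with hat | ha₂
        · rcases List.mem_cons.1 hat with rfl | ha₁
          · rw [hblku]
            exact (List.prefix_append t _).isInfix
          · rw [hblk1 a ha₁]
            exact (O₁.blk_infix a ha₁).trans h1
        · rw [hblk2 a ha₂]
          exact (O₂.blk_infix a ha₂).trans h2
      · -- ch_arc
        intro a ha b hb
        rw [hflat, List.mem_append] at ha
        rcases ha with hat | ha₂
        · rcases List.mem_cons.1 hat with rfl | ha₁
          · rw [hchu] at hb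
            exact arc_of_mem_nbrsOrd (hq a) (O₁.roots_sub.subset hb)
          · rw [hch1 a ha₁] at hb
            exact O₁.ch_arc a ha₁ b hb
        · rw [hch2 a ha₂] at hb
          exact O₂.ch_arc a ha₂ b hb
      · -- ch_mem
        intro a ha b hb
        rw [hflat, List.mem_append] at ha ⊢
        rcases ha with hat | ha₂
        · rcases List.mem_cons.1 hat with rfl | ha₁
          · rw [hchu] at hb
            obtain ⟨t', ht', rfl⟩ := List.mem_map.1 hb
            exact Or.inl (List.mem_cons_of_mem _
              (List.mem_flatten.2 ⟨t', ht', headI_mem' (O₁.tree_ne t' ht')⟩))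
          · rw [hch1 a ha₁] at hb
            exact Or.inl (List.mem_cons_of_mem _ (O₁.ch_mem a ha₁ b hb))
        · rw [hch2 a ha₂] at hb
          exact Or.inr (O₂.ch_mem a ha₂ b hb)
      · -- qlast
        intro a ha har hqch
        rw [hflat, List.mem_append] at ha
        rcases ha with hat | ha₂
        · rcases List.mem_cons.1 hat with rfl | ha₁
          · rw [hchu] at hqch
            have hsub : (O₁.ts.map (·.headI)).Sublist ((nbrList A a).erase (q a) ++ [q a]) := by
              have h0 := O₁.roots_sub
              unfold nbrsOrd at h0
              simpa only [if_neg har] using h0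
            obtain ⟨l₁, l₂, heq, hl₁, hl₂⟩ := List.sublist_append_iff.1 hsub
            have hql₁ : q a ∉ l₁ := fun h =>
              (Finset.nodup_toList _).not_mem_erase (hl₁.subset h)
            have hl₂' : l₂ = [q a] := by
              rcases List.sublist_singleton.1 hl₂ with rfl | h
              · rw [List.append_nil] at heq
                exact absurd (heq ▸ hqch) hql₁
              · exact h
            rw [hl₂'] at heq
            have hne : O₁.ts ≠ [] := by
              intro h
              rw [h] at heq
              simp at heq
            obtain ⟨ts', tl, hts⟩ : ∃ ts' tl, O₁.ts = ts' ++ [tl] :=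
              ⟨O₁.ts.dropLast, O₁.ts.getLast hne, (List.dropLast_append_getLast hne).symm⟩
            have hmap : (ts'.map (·.headI)) ++ [tl.headI] = l₁ ++ [q a] := by
              rw [← heq, hts]; simp
            have hqtl : tl.headI = q a := by
              have h3 := (List.append_inj' hmap rfl).2
              simpa using h3
            have htl : tl ∈ O₁.ts := by
              rw [hts]; exact List.mem_append_right _ (List.mem_singleton_self _)
            have htlne := O₁.tree_ne tl htl
            have hmemtl : tl.headI ∈ O₁.ts.flatten :=
              List.mem_flatten.2 ⟨tl, htl, headI_mem' htlne⟩
            have hblkq : blkN (q a) = tl := by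
              rw [← hqtl, hblk1 _ hmemtl]
              exact O₁.blk_root tl htl
            refine ⟨a :: ts'.flatten, ?_, rfl, List.cons_ne_nil _ _⟩
            rw [hblku, hblkq, ht, hts]
            simp
          · rw [hch1 a ha₁] at hqch
            obtain ⟨P, hP, hPh, hPne⟩ := O₁.qlast a ha₁ har hqch
            have hqm : q a ∈ O₁.ts.flatten := O₁.ch_mem a ha₁ _ hqch
            exact ⟨P, by rw [hblk1 a ha₁, hblk1 _ hqm]; exact hP, hPh, hPne⟩
        · rw [hch2 a ha₂] at hqch
          obtain ⟨P, hP, hPh, hPne⟩ := O₂.qlast a ha₂ har hqch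
          have hqm : q a ∈ O₂.ts.flatten := O₂.ch_mem a ha₂ _ hqch
          exact ⟨P, by rw [hblk2 a ha₂, hblk2 _ hqm]; exact hP, hPh, hPne⟩

end IRS3


section IRS4
variable {α : Type*} [DecidableEq α]

lemma indexOf_append_not_mem {w : α} {P Y : List α} (h : w ∉ P) :
    (P ++ Y).idxOf w = P.length + Y.idxOf w := by
  induction P with
  | nil => simp
  | cons a P ih =>
    have hwa : a ≠ w := fun hh => h (hh ▸ List.mem_cons_self)
    have h2 : w ∉ P := fun hh => h (List.mem_cons_of_mem _ hh)
    rw [List.cons_append, List.idxOf_cons_ne _ hwa, ih h2, List.length_cons]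
    omega

lemma indexOf_append_mem {w : α} {P Y : List α} (h : w ∈ P) :
    (P ++ Y).idxOf w = P.idxOf w ∧ P.idxOf w < P.length := by
  induction P with
  | nil => simp at h
  | cons a P ih =>
    by_cases hwa : a = w
    · subst hwa
      rw [List.cons_append, List.idxOf_cons_self, List.idxOf_cons_self]
      exact ⟨rfl, by simp⟩
    · have h2 : w ∈ P := by
        rcases List.mem_cons.1 h with h3 | h3
        · exact absurd h3.symm hwa
        · exact h3
      obtain ⟨ih1, ih2⟩ := ih h2
      rw [List.cons_append, List.idxOf_cons_ne _ hwa, List.idxOf_cons_ne _ hwa, ih1]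
      exact ⟨rfl, by simp; omega⟩

lemma mem_middle_iff {L P I Q : List α} (h : P ++ I ++ Q = L) (hnd : L.Nodup) {w : α}
    (hw : w ∈ L) :
    w ∈ I ↔ P.length ≤ L.idxOf w ∧ L.idxOf w < P.length + I.length := by
  subst h
  have hndPI : (P ++ I).Nodup := ((List.prefix_append (P ++ I) Q).sublist).nodup hnd
  by_cases hP : w ∈ P
  · have hwI : w ∉ I := fun hI => (List.disjoint_of_nodup_append hndPI) hP hI
    obtain ⟨he, hlt⟩ := indexOf_append_mem (Y := I ++ Q) (w := w) hP
    rw [List.append_assoc, he]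
    constructor
    · intro hh; exact absurd hh hwI
    · intro hh; omega
  · by_cases hI : w ∈ I
    · have hPI : w ∈ P ++ I := List.mem_append_right _ hI
      obtain ⟨he, hlt⟩ := indexOf_append_mem (Y := Q) (w := w) hPI
      rw [he, indexOf_append_not_mem hP]
      have h3 : I.idxOf w < I.length := List.idxOf_lt_length_iff.2 hI
      simp only [List.length_append] at hlt
      constructor
      · intro _; omega
      · intro _; exact hI
    · have hQ : w ∈ Q := by
        rcases List.mem_append.1 hw with h3 | h3
        · rcases List.mem_append.1 h3 with h4 | h4
          · exact absurd h4 hP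
          · exact absurd h4 hI
        · exact h3
      have hPI : w ∉ P ++ I := by
        rw [List.mem_append]; tauto
      rw [List.append_assoc, indexOf_append_not_mem hP, indexOf_append_not_mem hI]
      constructor
      · intro hh; exact absurd hh hI
      · intro hh; omega

lemma window1 (n x p ℓ : ℕ) (hx : x < n) (hpl : p + ℓ ≤ n) :
    ((n - p % n + x) % n < ℓ) ↔ (p ≤ x ∧ x < p + ℓ) := by
  by_cases hp : p = n
  · subst hp
    have hℓ : ℓ = 0 := by omega
    subst hℓ
    simp
  · have hpn : p < n := by omega
    rw [Nat.mod_eq_of_lt hpn]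
    rcases le_or_gt p x with h | h
    · have he : n - p + x = (x - p) + n := by omega
      rw [he, Nat.add_mod_right, Nat.mod_eq_of_lt (by omega : x - p < n)]
      omega
    · have he : n - p + x < n := by omega
      rw [Nat.mod_eq_of_lt he]
      omega

lemma window2 (n x p ℓ : ℕ) (hx : x < n) (hpl : p + ℓ ≤ n) (hp : p < n) :
    ((n - (p + ℓ) % n + x) % n < n - ℓ) ↔ ¬(p ≤ x ∧ x < p + ℓ) := by
  by_cases hs : p + ℓ = n
  · rw [hs, Nat.mod_self, Nat.sub_zero, Nat.add_comm, Nat.add_mod_right,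
      Nat.mod_eq_of_lt hx]
    omega
  · have hsn : p + ℓ < n := by omega
    rw [Nat.mod_eq_of_lt hsn]
    rcases le_or_gt (p + ℓ) x with h | h
    · have he : n - (p + ℓ) + x = (x - (p + ℓ)) + n := by omega
      rw [he, Nat.add_mod_right, Nat.mod_eq_of_lt (by omega : x - (p + ℓ) < n)]
      omega
    · have he : n - (p + ℓ) + x < n := by omega
      rw [Nat.mod_eq_of_lt he]
      omega

end IRS4


/-- Every finite strongly connected digraph on `n ≥ 2` vertices admits a feasible
interval routing scheme in which each arc is labelled with at most one cyclic interval: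
there are a cyclic ordering `ν` of the vertices and interval labels `S` on the arcs
such that at every vertex the labels of the outgoing arcs partition the other vertices,
and greedy forwarding always reaches the destination. -/
theorem stmt_7 {V : Type*} [Fintype V] (n : ℕ) (hn : 2 ≤ n)
    (hcard : Fintype.card V = n)
    (A : V → V → Prop) (hsc : ∀ u v : V, Relation.ReflTransGen A u v) :
    ∃ (ν : V ≃ Fin n) (S : V → V → Set V),
      (∀ u v : V, A u v →
        (S u v = ∅ ∨ ∃ (a : Fin n) (k : ℕ),
          S u v = {w | ((ν w - a : Fin n) : ℕ) < k})) ∧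
      (∀ v : V, Set.PairwiseDisjoint {w | A v w} (S v)) ∧
      (∀ v : V, (⋃ w ∈ {w | A v w}, S v w) = {v}ᶜ) ∧
      (∀ x d : V, x ≠ d → ∃ p : List V, p.head? = some x ∧ p.getLast? = some d ∧
        p.Chain' (fun a b => A a b ∧ d ∈ S a b)) := by
  classical
  haveI : NeZero n := ⟨by omega⟩
  letI : NatCast (Fin n) := Fin.NatCast.instNatCast n
  have hNE : Nonempty V := by
    rw [← Fintype.card_pos_iff, hcard]; omega
  obtain ⟨r⟩ := hNE
  letI : Inhabited V := ⟨r⟩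
  obtain ⟨m, q, hqm⟩ := exists_qm A r (fun v => hsc v r)
  have hq1 : ∀ u, u ≠ r → A u (q u) := fun u h => (hqm u h).1
  obtain ⟨O⟩ := dfs_exists A r q hq1 n [r] ∅
    (by rw [Finset.sdiff_empty, Finset.card_univ, hcard])
  set J := O.ts.flatten with hJdef
  have hJall : ∀ x, x ∈ J := by
    intro x
    refine (O.mem_iff x).2 ⟨r, List.mem_singleton_self _, Finset.notMem_empty r, ?_⟩
    exact Relation.ReflTransGen.mono (p := fun a b => A a b ∧ b ∉ (∅ : Finset V)) (fun a b hab => ⟨hab, Finset.notMem_empty b⟩) _ _ (hsc r x)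
  have hnd : J.Nodup := O.nodup
  have hlen : J.length = n := by
    have h1 : J.toFinset = Finset.univ :=
      Finset.eq_univ_iff_forall.2 (fun x => List.mem_toFinset.2 (hJall x))
    have h2 := List.toFinset_card_of_nodup hnd
    rw [h1, Finset.card_univ, hcard] at h2
    omega
  have hblkr : O.blk r = J := by
    have hrs := O.roots_sub
    have hrJ : r ∈ J := hJall r
    rcases hts : O.ts with _ | ⟨t, rest⟩
    · rw [hJdef, hts] at hrJ; simp at hrJ
    · rcases rest with _ | ⟨t2, r2⟩
      · have hhead : t.headI = r := by
          rw [hts] at hrs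
          simp only [List.map_cons, List.map_nil] at hrs
          rcases List.sublist_singleton.1 hrs with h | h
          · simp at h
          · simpa using h
        have h3 := O.blk_root t (by rw [hts]; exact List.mem_cons_self)
        rw [hhead] at h3
        rw [h3, hJdef, hts]
        simp
      · have h4 := hrs.length_le
        rw [hts] at h4
        simp at h4
  -- per-vertex facts
  have hbeq : ∀ a, O.blk a = a :: ((O.ch a).map O.blk).flatten :=
    fun a => O.blk_eq a (hJall a)
  have hinf : ∀ a, O.blk a <:+: J := fun a => O.blk_infix a (hJall a)
  have hbnd : ∀ a, (O.blk a).Nodup := fun a => List.Nodup.sublist (hinf a).sublist hnd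
  have hmemblk : ∀ a, a ∈ O.blk a := fun a => by
    rw [hbeq a]; exact List.mem_cons_self
  have hblkne : ∀ a, O.blk a ≠ [] := fun a => by
    rw [hbeq a]; exact List.cons_ne_nil _ _
  have hchArc : ∀ a b, b ∈ O.ch a → A a b := fun a b h => O.ch_arc a (hJall a) b h
  have hchsub : ∀ a b, b ∈ O.ch a → ∀ x, x ∈ O.blk b → x ∈ O.blk a := by
    intro a b hb x hx
    rw [hbeq a]
    exact List.mem_cons_of_mem _ (List.mem_flatten.2 ⟨O.blk b, List.mem_map_of_mem hb, hx⟩)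
  have hnotin_child : ∀ a b, b ∈ O.ch a → a ∉ O.blk b := by
    intro a b hb hmem
    have h1 := hbnd a
    rw [hbeq a] at h1
    exact (List.nodup_cons.1 h1).1
      (List.mem_flatten.2 ⟨O.blk b, List.mem_map_of_mem hb, hmem⟩)
  have hchild_of : ∀ a d, d ∈ O.blk a → d ≠ a → ∃ b ∈ O.ch a, d ∈ O.blk b := by
    intro a d hd hda
    rw [hbeq a] at hd
    rcases List.mem_cons.1 hd with rfl | hd
    · exact absurd rfl hda
    · obtain ⟨l, hl, hdl⟩ := List.mem_flatten.1 hd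
      obtain ⟨b, hb, rfl⟩ := List.mem_map.1 hl
      exact ⟨b, hb, hdl⟩
  have hdisj_ch : ∀ a b₁ b₂, b₁ ∈ O.ch a → b₂ ∈ O.ch a → b₁ ≠ b₂ →
      ∀ x, x ∈ O.blk b₁ → x ∉ O.blk b₂ := by
    intro a b₁ b₂ hb₁ hb₂ hne
    have h1 := hbnd a
    rw [hbeq a] at h1
    have h2 := (List.nodup_cons.1 h1).2
    obtain ⟨-, hpw⟩ := List.nodup_flatten.1 h2
    have hpw2 : (O.ch a).Pairwise (fun c₁ c₂ => (O.blk c₁).Disjoint (O.blk c₂)) :=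
      List.pairwise_map.1 hpw
    have hsymm : Symmetric (fun c₁ c₂ : V => (O.blk c₁).Disjoint (O.blk c₂)) :=
      fun c₁ c₂ h x hx₁ hx₂ => h hx₂ hx₁
    exact fun x hx₁ hx₂ => (haveI : Std.Symm (fun c₁ c₂ : V => (O.blk c₁).Disjoint (O.blk c₂)) := ⟨hsymm⟩; hpw2.forall hb₁ hb₂ hne) hx₁ hx₂
  have hlen_lt : ∀ a b, b ∈ O.ch a → (O.blk b).length < (O.blk a).length := by
    intro a b hb
    have h2 : (O.blk b).length ≤ (((O.ch a).map O.blk).flatten).length :=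
      (List.sublist_flatten_of_mem (List.mem_map_of_mem hb)).length_le
    rw [hbeq a]
    simp only [List.length_cons]
    omega
  have hblen_le_n : ∀ a, (O.blk a).length ≤ n := fun a => by
    rw [← hlen]; exact (hinf a).sublist.length_le
  have hnotblk_ne_r : ∀ a d, d ∉ O.blk a → a ≠ r := by
    intro a d hd h
    exact hd (by rw [h, hblkr]; exact hJall d)
  have hqlast : ∀ a, a ≠ r → q a ∈ O.ch a → ∃ P, O.blk a = P ++ O.blk (q a) ∧ P ≠ [] ∧
      (∀ x, x ∈ P ↔ (x ∈ O.blk a ∧ x ∉ O.blk (q a))) := by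
    intro a har hch
    obtain ⟨P, hP, hPh, hPne⟩ := O.qlast a (hJall a) har hch
    refine ⟨P, hP, hPne, ?_⟩
    have hnd2 : (P ++ O.blk (q a)).Nodup := hP ▸ hbnd a
    have hdisj2 := List.disjoint_of_nodup_append hnd2
    intro x
    constructor
    · intro hx
      exact ⟨by rw [hP]; exact List.mem_append_left _ hx, fun h2 => hdisj2 hx h2⟩
    · rintro ⟨h1, h2⟩
      rw [hP] at h1
      rcases List.mem_append.1 h1 with h | h
      · exact h
      · exact absurd h h2
  -- the numbering
  have hidx_lt : ∀ w : V, J.idxOf w < n := fun w => by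
    rw [← hlen]; exact List.idxOf_lt_length_iff.2 (hJall w)
  set ν : V ≃ Fin n := Equiv.ofBijective (fun w => (⟨J.idxOf w, hidx_lt w⟩ : Fin n)) (by
    rw [Fintype.bijective_iff_injective_and_card]
    refine ⟨?_, by simp [hcard]⟩
    intro w₁ w₂ h
    have h2 : J.idxOf w₁ = J.idxOf w₂ := congrArg Fin.val h
    exact (List.idxOf_inj (hJall w₁)).1 h2) with hν
  have hνval : ∀ w, ((ν w : Fin n) : ℕ) = J.idxOf w := fun w => rfl
  -- interval lemmas
  have key_int : ∀ I : List V, I <:+: J →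
      ∃ (a : Fin n) (k : ℕ), {x | x ∈ I} = {w : V | ((ν w - a : Fin n) : ℕ) < k} := by
    intro I hI
    obtain ⟨P, Q, hPQ⟩ := hI
    have hplen : P.length + I.length ≤ n := by
      have h4 := congrArg List.length hPQ
      simp only [List.length_append] at h4
      rw [hlen] at h4
      omega
    refine ⟨(P.length : Fin n), I.length, ?_⟩
    ext w
    simp only [Set.mem_setOf_eq]
    have hv : ((ν w - (P.length : Fin n) : Fin n) : ℕ) =
        (n - P.length % n + J.idxOf w) % n := by
      rw [Fin.sub_def]
      simp only [Fin.val_natCast]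
      rw [hνval]
    rw [mem_middle_iff hPQ hnd (hJall w),
      ← window1 n (J.idxOf w) P.length I.length (hidx_lt w) hplen, hv]
  have key_coint : ∀ I : List V, I <:+: J → I ≠ [] →
      ∃ (a : Fin n) (k : ℕ), {x | x ∈ I}ᶜ = {w : V | ((ν w - a : Fin n) : ℕ) < k} := by
    intro I hI hIne
    obtain ⟨P, Q, hPQ⟩ := hI
    have hplen : P.length + I.length ≤ n := by
      have h4 := congrArg List.length hPQ
      simp only [List.length_append] at h4
      rw [hlen] at h4
      omega
    have hIpos : 0 < I.length := List.length_pos_iff.2 hIne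
    have hp : P.length < n := by omega
    refine ⟨((P.length + I.length : ℕ) : Fin n), n - I.length, ?_⟩
    ext w
    simp only [Set.mem_compl_iff, Set.mem_setOf_eq]
    have hv : ((ν w - ((P.length + I.length : ℕ) : Fin n) : Fin n) : ℕ) =
        (n - (P.length + I.length) % n + J.idxOf w) % n := by
      rw [Fin.sub_def]
      simp only [Fin.val_natCast]
      rw [hνval]
    rw [mem_middle_iff hPQ hnd (hJall w),
      ← window2 n (J.idxOf w) P.length I.length (hidx_lt w) hplen hp, hv]
  -- the labels
  set S : V → V → Set V := fun a b =>
    if a ≠ r ∧ b = q a then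
      (if b ∈ O.ch a then {x | x ∈ O.blk a ∧ x ∉ O.blk b}ᶜ else {x | x ∈ O.blk a}ᶜ)
    else (if b ∈ O.ch a then {x | x ∈ O.blk b} else ∅) with hS
  have hS_CM : ∀ a b, a ≠ r → b = q a → b ∈ O.ch a →
      S a b = {x | x ∈ O.blk a ∧ x ∉ O.blk b}ᶜ := by
    intro a b h1 h2 h3
    show (if a ≠ r ∧ b = q a then _ else _) = _
    rw [if_pos ⟨h1, h2⟩, if_pos h3]
  have hS_CU : ∀ a b, a ≠ r → b = q a → b ∉ O.ch a → S a b = {x | x ∈ O.blk a}ᶜ := by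
    intro a b h1 h2 h3
    show (if a ≠ r ∧ b = q a then _ else _) = _
    rw [if_pos ⟨h1, h2⟩, if_neg h3]
  have hS_CD : ∀ a b, ¬(a ≠ r ∧ b = q a) → b ∈ O.ch a → S a b = {x | x ∈ O.blk b} := by
    intro a b h1 h3
    show (if a ≠ r ∧ b = q a then _ else _) = _
    rw [if_neg h1, if_pos h3]
  have hS_CE : ∀ a b, ¬(a ≠ r ∧ b = q a) → b ∉ O.ch a → S a b = ∅ := by
    intro a b h1 h3
    show (if a ≠ r ∧ b = q a then _ else _) = _
    rw [if_neg h1, if_neg h3]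
  have hSsub : ∀ a b x, x ∈ S a b →
      (b ∈ O.ch a ∧ x ∈ O.blk b) ∨ ((a ≠ r ∧ b = q a) ∧ x ∉ O.blk a) := by
    intro a b x hx
    by_cases h1 : a ≠ r ∧ b = q a
    · by_cases h2 : b ∈ O.ch a
      · rw [hS_CM a b h1.1 h1.2 h2] at hx
        simp only [Set.mem_compl_iff, Set.mem_setOf_eq, not_and, not_not] at hx
        by_cases h3 : x ∈ O.blk a
        · exact Or.inl ⟨h2, hx h3⟩
        · exact Or.inr ⟨h1, h3⟩
      · rw [hS_CU a b h1.1 h1.2 h2] at hx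
        exact Or.inr ⟨h1, hx⟩
    · by_cases h2 : b ∈ O.ch a
      · rw [hS_CD a b h1 h2] at hx
        exact Or.inl ⟨h2, hx⟩
      · rw [hS_CE a b h1 h2] at hx
        exact absurd hx (Set.notMem_empty x)
  refine ⟨ν, S, ?_, ?_, ?_, ?_⟩
  · -- condition 1 : intervals
    intro u v huv
    by_cases h1 : u ≠ r ∧ v = q u
    · right
      by_cases h2 : v ∈ O.ch u
      · rw [hS_CM u v h1.1 h1.2 h2]
        obtain ⟨P, hP, hPne, hPmem⟩ := hqlast u h1.1 (h1.2 ▸ h2)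
        have hset : {x : V | x ∈ O.blk u ∧ x ∉ O.blk v} = {x | x ∈ P} := by
          ext x
          simp only [Set.mem_setOf_eq]
          rw [h1.2]
          exact (hPmem x).symm
        rw [hset]
        have hPinf : P <:+: J := (List.IsPrefix.isInfix ⟨O.blk (q u), hP.symm⟩).trans (hinf u)
        exact key_coint P hPinf hPne
      · rw [hS_CU u v h1.1 h1.2 h2]
        exact key_coint (O.blk u) (hinf u) (hblkne u)
    · by_cases h2 : v ∈ O.ch u
      · right
        rw [hS_CD u v h1 h2]
        exact key_int (O.blk v) (hinf v)
      · exact Or.inl (hS_CE u v h1 h2)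
  · -- condition 2 : pairwise disjoint
    intro v b₁ hb₁ b₂ hb₂ hne
    simp only [Function.onFun]
    rw [Set.disjoint_left]
    intro x hx₁ hx₂
    rcases hSsub v b₁ x hx₁ with ⟨hc₁, hxb₁⟩ | ⟨⟨hvr, hq₁⟩, hnb₁⟩ <;>
      rcases hSsub v b₂ x hx₂ with ⟨hc₂, hxb₂⟩ | ⟨⟨hvr₂, hq₂⟩, hnb₂⟩
    · exact hdisj_ch v b₁ b₂ hc₁ hc₂ hne x hxb₁ hxb₂
    · exact hnb₂ (hchsub v b₁ hc₁ x hxb₁)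
    · exact hnb₁ (hchsub v b₂ hc₂ x hxb₂)
    · exact hne (hq₁.trans hq₂.symm)
  · -- condition 3 : union
    intro v
    ext x
    simp only [Set.mem_iUnion, Set.mem_setOf_eq, exists_prop, Set.mem_compl_iff,
      Set.mem_singleton_iff]
    constructor
    · rintro ⟨b, hab, hx⟩ rfl
      rcases hSsub x b x hx with ⟨hc, hxb⟩ | ⟨-, hnb⟩
      · exact hnotin_child x b hc hxb
      · exact hnb (hmemblk x)
    · intro hxv
      by_cases h3 : x ∈ O.blk v
      · obtain ⟨c, hc, hxc⟩ := hchild_of v x h3 hxv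
        refine ⟨c, hchArc v c hc, ?_⟩
        by_cases h1 : v ≠ r ∧ c = q v
        · rw [hS_CM v c h1.1 h1.2 hc]
          simp only [Set.mem_compl_iff, Set.mem_setOf_eq, not_and, not_not]
          exact fun _ => hxc
        · rw [hS_CD v c h1 hc]
          exact hxc
      · have hvr : v ≠ r := hnotblk_ne_r v x h3
        refine ⟨q v, hq1 v hvr, ?_⟩
        by_cases h2 : q v ∈ O.ch v
        · rw [hS_CM v (q v) hvr rfl h2]
          simp only [Set.mem_compl_iff, Set.mem_setOf_eq, not_and, not_not]
          exact fun h4 => absurd h4 h3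
        · rw [hS_CU v (q v) hvr rfl h2]
          exact h3
  · -- condition 4 : routing
    intro x d hxd
    set μ : V → V → ℕ := fun d a => if d ∈ O.blk a then (O.blk a).length else n + 1 + m a
      with hμ
    have hstep : ∀ a, a ≠ d → ∃ b, A a b ∧ d ∈ S a b ∧ (b = d ∨ μ d b < μ d a) := by
      intro a had
      by_cases h3 : d ∈ O.blk a
      · obtain ⟨c, hc, hdc⟩ := hchild_of a d h3 (fun h => had h.symm)
        refine ⟨c, hchArc a c hc, ?_, ?_⟩
        · by_cases h1 : a ≠ r ∧ c = q a
          · rw [hS_CM a c h1.1 h1.2 hc]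
            simp only [Set.mem_compl_iff, Set.mem_setOf_eq, not_and, not_not]
            exact fun _ => hdc
          · rw [hS_CD a c h1 hc]
            exact hdc
        · by_cases hcd : c = d
          · exact Or.inl hcd
          · right
            have h5 : μ d c = (O.blk c).length := if_pos hdc
            have h6 : μ d a = (O.blk a).length := if_pos h3
            rw [h5, h6]
            exact hlen_lt a c hc
      · have hvr : a ≠ r := hnotblk_ne_r a d h3
        refine ⟨q a, hq1 a hvr, ?_, ?_⟩
        · by_cases h2 : q a ∈ O.ch a
          · rw [hS_CM a (q a) hvr rfl h2]
            simp only [Set.mem_compl_iff, Set.mem_setOf_eq, not_and, not_not]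
            exact fun h4 => absurd h4 h3
          · rw [hS_CU a (q a) hvr rfl h2]
            exact h3
        · by_cases hqd : q a = d
          · exact Or.inl hqd
          · right
            have h6 : μ d a = n + 1 + m a := if_neg h3
            rw [h6]
            by_cases h7 : d ∈ O.blk (q a)
            · have h8 : μ d (q a) = (O.blk (q a)).length := if_pos h7
              rw [h8]
              have := hblen_le_n (q a)
              omega
            · have h8 : μ d (q a) = n + 1 + m (q a) := if_neg h7
              rw [h8]
              have := (hqm a hvr).2
              omega
    have hroute : ∀ (N : ℕ) (a : V), μ d a ≤ N → a ≠ d →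
        ∃ p : List V, p.head? = some a ∧ p.getLast? = some d ∧
          p.Chain' (fun x y => A x y ∧ d ∈ S x y) := by
      intro N
      induction N with
      | zero =>
        intro a hμa _
        exfalso
        have hpos : 0 < μ d a := by
          by_cases h : d ∈ O.blk a
          · have h5 : μ d a = (O.blk a).length := if_pos h
            rw [h5]
            exact List.length_pos_iff.2 (hblkne a)
          · have h5 : μ d a = n + 1 + m a := if_neg h
            omega
        omega
      | succ N ih =>
        intro a hμa had
        obtain ⟨b, hab, hdS, hbd⟩ := hstep a had
        by_cases hbd2 : b = d
        · rw [hbd2] at hab hdS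
          exact ⟨[a, d], rfl, by simp, List.isChain_pair.2 ⟨hab, hdS⟩⟩
        · have hlt : μ d b < μ d a := hbd.resolve_left hbd2
          obtain ⟨p, hph, hpl, hpc⟩ := ih b (by omega) hbd2
          cases p with
          | nil => simp at hph
          | cons y p' =>
            have hyb : y = b := by simpa using hph
            refine ⟨a :: y :: p', rfl, ?_, List.isChain_cons_cons.2 ⟨⟨?_, ?_⟩, hpc⟩⟩
            · rw [List.getLast?_cons_cons]
              exact hpl
            · rw [hyb]; exact hab
            · rw [hyb]; exact hdS
    exact hroute (μ d x) x le_rfl hxd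
end
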